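/- arXiv:1812.02166 — 2 statements merged into one kernel-verified Lean document; each statement's English description precedes it below -/
import Mathlib

section
/- In an equitable 2-partition of Q_{12} with quotient matrix [[3,9],[7,5]], the set of nonzero Fourier coefficients of the associated function consists of exactly 63 words of weight 8, each coefficient being ±1, and the 63 quadruples of zero-coordinates of these words form a (3,4,12)-covering in which exactly 16 triples (counted with multiplicity of overcovering divided by 2) are covered more than once; every triple is covered an odd number of times. -/
attribute [local instance] Classical.propDecidable
noncomputable section

/-- Vertices of the `n`-cube: binary words of length `n` over GF(2). -/
abbrev Vtx (n : ℕ) := Fin n → ZMod 2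

/-- The (Hamming) weight of a word: the number of ones. -/
def wt {n : ℕ} (x : Vtx n) : ℕ := (Finset.univ.filter (fun i => x i = 1)).card

/-- The inner product `x₁y₁ + ⋯ + xₙyₙ` computed as a natural number. -/
def ip {n : ℕ} (x y : Vtx n) : ℕ := ∑ i, (x i).val * (y i).val

/-- The character `χ_y(x) = (−1)^⟨x,y⟩`. -/
def chi {n : ℕ} (y x : Vtx n) : ℚ := (-1) ^ ip x y

/-- `leq z x` means `z ≼ x`, i.e. `zᵢ ≤ xᵢ` for all `i`. -/
def leq {n : ℕ} (x y : Vtx n) : Prop := ∀ i, (x i).val ≤ (y i).val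

/-- The Fourier coefficient `f̂(y) = 2^{−n} Σ_z f(z)(−1)^⟨z,y⟩`. -/
def hat {n : ℕ} (f : Vtx n → ℚ) (y : Vtx n) : ℚ :=
  (∑ z, f z * (-1 : ℚ) ^ ip z y) / 2 ^ n

/-- Adjacency in the `n`-cube: the words differ in exactly one coordinate. -/
def adj {n : ℕ} (x y : Vtx n) : Prop :=
  (Finset.univ.filter (fun i => x i ≠ y i)).card = 1

/-- `(C0, complement of C0)` is an equitable partition with quotient matrix
`[[a,b],[c,d]]`. -/
def IsEqPartition {n : ℕ} (C0 : Finset (Vtx n)) (a b c d : ℕ) : Prop :=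
  (∀ x ∈ C0, (Finset.univ.filter (fun y => adj x y ∧ y ∈ C0)).card = a ∧
             (Finset.univ.filter (fun y => adj x y ∧ y ∉ C0)).card = b) ∧
  (∀ x ∉ C0, (Finset.univ.filter (fun y => adj x y ∧ y ∈ C0)).card = c ∧
             (Finset.univ.filter (fun y => adj x y ∧ y ∉ C0)).card = d)

/-- The associated function of an equitable partition: `b` on `C0`, `−c` outside. -/
def assoc {n : ℕ} (C0 : Finset (Vtx n)) (b c : ℕ) : Vtx n → ℚ :=
  fun x => if x ∈ C0 then (b : ℚ) else -(c : ℚ)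

/-- The face `Γ_u^v = {z + v : z ≼ u}` (of dimension `wt u`). -/
def face {n : ℕ} (u v : Vtx n) : Finset (Vtx n) :=
  Finset.univ.filter (fun x => ∃ z, leq z u ∧ x = z + v)

/-- The set of nonzeros of the Fourier transform of the associated function. -/
def nonzeros (C0 : Finset (Vtx 12)) : Finset (Vtx 12) :=
  Finset.univ.filter (fun x : Vtx 12 => hat (assoc C0 9 7) x ≠ 0)

/-- The number of blocks (quadruples of zero coordinates of nonzeros)
containing the triple (or set) `T` of coordinates. -/
def cnt (C0 : Finset (Vtx 12)) (T : Finset (Fin 12)) : ℕ :=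
  ((nonzeros C0).filter (fun x => ∀ i ∈ T, x i = 0)).card


lemma zmod2_cases : ∀ a : ZMod 2, a = 0 ∨ a = 1 := by decide

lemma neg_one_pow_mod (a : ℕ) : ((-1:ℚ))^a = (-1)^(a % 2) := by
  conv_lhs => rw [← Nat.div_add_mod a 2, pow_add, pow_mul]
  norm_num

lemma neg_one_pow_congr' {a b : ℕ} (h : a % 2 = b % 2) : ((-1:ℚ))^a = (-1)^b := by
  rw [neg_one_pow_mod a, neg_one_pow_mod b, h]

lemma ip_add_left {n : ℕ} (x y w : Vtx n) :
    ((-1:ℚ))^(ip (x + y) w) = (-1)^(ip x w) * (-1)^(ip y w) := by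
  rw [← pow_add]
  apply neg_one_pow_congr'
  unfold ip
  rw [← Finset.sum_add_distrib]
  rw [Finset.sum_nat_mod]
  conv_rhs => rw [Finset.sum_nat_mod]
  congr 1
  apply Finset.sum_congr rfl
  intro i _
  have hv : ((x + y) i).val = ((x i).val + (y i).val) % 2 := by
    show ((x i + y i)).val = _
    exact ZMod.val_add (x i) (y i)
  rw [hv, Nat.mod_mul_mod, add_mul]

lemma ip_comm {n : ℕ} (x y : Vtx n) : ip x y = ip y x := by
  unfold ip; exact Finset.sum_congr rfl fun i _ => Nat.mul_comm _ _

/-- standard basis vector -/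
def ee {n : ℕ} (i : Fin n) : Vtx n := fun j => if j = i then 1 else 0

lemma val_one' : (1 : ZMod 2).val = 1 := rfl

lemma ip_ee {n : ℕ} (i : Fin n) (w : Vtx n) : ip (ee i) w = (w i).val := by
  unfold ip ee
  rw [Finset.sum_eq_single i]
  · simp [val_one']
  · intro j _ hj; simp [hj]
  · simp

lemma sum_chi_zero {n : ℕ} {u : Vtx n} (hu : u ≠ 0) :
    ∑ z : Vtx n, ((-1:ℚ))^(ip z u) = 0 := by
  obtain ⟨i, hi⟩ : ∃ i, u i ≠ 0 := by
    by_contra hc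
    push_neg at hc
    exact hu (funext hc)
  have hi1 : u i = 1 := (zmod2_cases (u i)).resolve_left hi
  have key : ∑ z : Vtx n, ((-1:ℚ))^(ip z u) = ∑ z : Vtx n, ((-1:ℚ))^(ip (z + ee i) u) := by
    exact (Fintype.sum_equiv (Equiv.addRight (ee i)) _ _ (fun z => rfl)).symm
  have flip : ∀ z : Vtx n, ((-1:ℚ))^(ip (z + ee i) u) = -((-1:ℚ))^(ip z u) := by
    intro z
    rw [ip_add_left, ip_ee, hi1]
    simp [val_one']
  have h2 : ∑ z : Vtx n, ((-1:ℚ))^(ip (z + ee i) u) = -∑ z : Vtx n, ((-1:ℚ))^(ip z u) := by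
    rw [← Finset.sum_neg_distrib]
    exact Finset.sum_congr rfl fun z _ => flip z
  rw [h2] at key
  linarith

lemma card_vtx (n : ℕ) : Fintype.card (Vtx n) = 2^n := by
  simp [Fintype.card_fun]

lemma add_self_eq_zero' {n : ℕ} (y : Vtx n) : y + y = 0 := by
  funext i
  show y i + y i = 0
  rcases zmod2_cases (y i) with h | h <;> rw [h] <;> decide

lemma vtx_add_eq_zero_iff {n : ℕ} (y w : Vtx n) : y + w = 0 ↔ y = w := by
  constructor
  · intro h
    have := congrArg (· + w) h
    simpa [add_assoc, add_self_eq_zero'] using this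
  · intro h; rw [h]; exact add_self_eq_zero' w

lemma sum_chi {n : ℕ} (u : Vtx n) :
    ∑ z : Vtx n, ((-1:ℚ))^(ip z u) = if u = 0 then (2:ℚ)^n else 0 := by
  by_cases h : u = 0
  · simp only [h, if_pos rfl]
    have : ∀ z : Vtx n, ip z (0 : Vtx n) = 0 := by
      intro z; unfold ip
      apply Finset.sum_eq_zero; intro i _
      show (z i).val * (0 : ZMod 2).val = 0
      simp [ZMod.val_zero]
    rw [Finset.sum_congr rfl fun z _ => by rw [this z, pow_zero]]
    simp [Finset.card_univ, card_vtx]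
  · rw [if_neg h]; exact sum_chi_zero h

lemma chi_mul_chi {n : ℕ} (z y w : Vtx n) :
    ((-1:ℚ))^(ip z y) * ((-1:ℚ))^(ip z w) = ((-1:ℚ))^(ip z (y + w)) := by
  rw [ip_comm z (y+w), ip_add_left, ip_comm y z, ip_comm w z]

lemma sum_chi_mul {n : ℕ} (y w : Vtx n) :
    ∑ z : Vtx n, ((-1:ℚ))^(ip z y) * ((-1:ℚ))^(ip z w) = if y = w then (2:ℚ)^n else 0 := by
  rw [Finset.sum_congr rfl fun z _ => chi_mul_chi z y w, sum_chi]
  congr 1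
  rw [eq_iff_iff]
  constructor
  · intro h
    have := (vtx_add_eq_zero_iff y w).mp h
    exact this
  · intro h; rw [h]; exact add_self_eq_zero' w

lemma inversion {n : ℕ} (f : Vtx n → ℚ) (x : Vtx n) :
    f x = ∑ y : Vtx n, hat f y * ((-1:ℚ))^(ip x y) := by
  unfold hat
  have : ∀ y : Vtx n, (∑ z, f z * (-1 : ℚ) ^ ip z y) / 2 ^ n * ((-1:ℚ))^(ip x y)
      = (∑ z, f z * (((-1 : ℚ) ^ ip z y) * ((-1:ℚ))^(ip x y))) / 2^n := by
    intro y
    rw [div_mul_eq_mul_div, Finset.sum_mul]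
    congr 1
    exact Finset.sum_congr rfl fun z _ => by ring
  rw [Finset.sum_congr rfl fun y _ => this y, ← Finset.sum_div]
  rw [Finset.sum_comm]
  have inner : ∀ z : Vtx n, (∑ y : Vtx n, f z * (((-1 : ℚ) ^ ip z y) * ((-1:ℚ))^(ip x y)))
      = f z * (if z = x then (2:ℚ)^n else 0) := by
    intro z
    rw [← Finset.mul_sum]
    congr 1
    have : ∀ y : Vtx n, ((-1 : ℚ) ^ ip z y) * ((-1:ℚ))^(ip x y)
        = ((-1 : ℚ) ^ ip y z) * ((-1:ℚ))^(ip y x) := by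
      intro y; rw [ip_comm z y, ip_comm x y]
    rw [Finset.sum_congr rfl fun y _ => this y]
    exact sum_chi_mul z x
  rw [Finset.sum_congr rfl fun z _ => inner z]
  have : (∑ z : Vtx n, f z * if z = x then (2:ℚ)^n else 0)
      = ∑ z : Vtx n, if z = x then f z * (2:ℚ)^n else 0 := by
    apply Finset.sum_congr rfl; intro z _; split_ifs <;> simp
  rw [this, Finset.sum_ite_eq' Finset.univ x (fun z => f z * (2:ℚ)^n)]
  simp only [Finset.mem_univ, if_pos]
  field_simp

lemma parseval {n : ℕ} (f : Vtx n → ℚ) :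
    ∑ y : Vtx n, (hat f y)^2 = (∑ z : Vtx n, (f z)^2) / 2^n := by
  have : ∀ y : Vtx n, (hat f y)^2 = hat f y * ((∑ z, f z * (-1 : ℚ) ^ ip z y) / 2^n) := by
    intro y; rw [sq]; rfl
  rw [Finset.sum_congr rfl fun y _ => this y]
  have expand : ∀ y : Vtx n, hat f y * ((∑ z, f z * (-1 : ℚ) ^ ip z y) / 2^n)
      = (∑ z, f z * (hat f y * (-1 : ℚ) ^ ip z y)) / 2^n := by
    intro y
    rw [mul_div_assoc', Finset.mul_sum]
    congr 1
    exact Finset.sum_congr rfl fun z _ => by ring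
  rw [Finset.sum_congr rfl fun y _ => expand y, ← Finset.sum_div]
  congr 1
  rw [Finset.sum_comm]
  apply Finset.sum_congr rfl
  intro z _
  rw [← Finset.mul_sum, ← inversion f z, sq]

-- ## adjacency

lemma zmod2_ne_iff : ∀ a b : ZMod 2, (a ≠ b) ↔ b = a + 1 := by decide

lemma adj_iff {n : ℕ} (x y : Vtx n) : adj x y ↔ ∃ i, y = x + ee i := by
  constructor
  · intro h
    obtain ⟨i₀, hi₀⟩ := Finset.card_eq_one.mp h
    refine ⟨i₀, funext fun j => ?_⟩
    by_cases hj : j = i₀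
    · subst hj
      have hmem : j ∈ Finset.univ.filter (fun i => x i ≠ y i) := by rw [hi₀]; simp
      have hne : x j ≠ y j := (Finset.mem_filter.mp hmem).2
      have : y j = x j + 1 := (zmod2_ne_iff _ _).mp hne
      show y j = x j + ee j j
      rw [this]; congr 1; simp [ee]
    · have hmem : j ∉ Finset.univ.filter (fun i => x i ≠ y i) := by
        rw [hi₀]; simp [hj]
      have heq : x j = y j := by
        by_contra hc
        exact hmem (Finset.mem_filter.mpr ⟨Finset.mem_univ j, hc⟩)
      show y j = x j + ee i₀ j
      rw [← heq]; simp [ee, hj]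
  · rintro ⟨i, rfl⟩
    show Finset.card _ = 1
    have heq : Finset.univ.filter (fun j => x j ≠ (x + ee i) j) = {i} := by
      ext j
      simp only [Finset.mem_filter, Finset.mem_univ, true_and, Finset.mem_singleton]
      show (x j ≠ x j + ee i j) ↔ j = i
      by_cases hj : j = i
      · subst hj
        simp only [ee, if_pos rfl, iff_true]
        rcases zmod2_cases (x j) with h | h <;> rw [h] <;> decide
      · simp [ee, hj]
    rw [heq, Finset.card_singleton]

lemma neighbors_eq {n : ℕ} (y : Vtx n) :
    Finset.univ.filter (fun x => adj x y) = Finset.univ.image (fun i => y + ee i) := by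
  ext x
  simp only [Finset.mem_filter, Finset.mem_univ, true_and, Finset.mem_image, adj_iff]
  constructor
  · rintro ⟨i, hy⟩
    exact ⟨i, by rw [hy, add_assoc, add_self_eq_zero', add_zero]⟩
  · rintro ⟨i, rfl⟩
    exact ⟨i, by rw [add_assoc, add_self_eq_zero', add_zero]⟩

lemma ee_inj {n : ℕ} : Function.Injective (ee (n := n)) := by
  intro i j hij
  by_contra hne
  have := congrFun hij i
  simp [ee, hne] at this

lemma sum_neighbors {n : ℕ} (y : Vtx n) (g : Vtx n → ℚ) :
    ∑ x : Vtx n, (if adj x y then g x else 0) = ∑ i : Fin n, g (y + ee i) := by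
  classical
  rw [← Finset.sum_filter, neighbors_eq]
  rw [Finset.sum_image]
  intro i _ j _ hij
  exact ee_inj (add_right_injective y hij)

-- ## eigenfunction and support

section Main
variable (C0 : Finset (Vtx 12))

local notation "f" => assoc C0 9 7

lemma eigen (h : IsEqPartition C0 3 9 7 5) (x : Vtx 12) :
    ∑ y : Vtx 12, (if adj x y then f y else 0) = -4 * f x := by
  have split : ∀ y : Vtx 12, (if adj x y then f y else 0)
      = (if adj x y ∧ y ∈ C0 then (9:ℚ) else 0) + (if adj x y ∧ y ∉ C0 then (-7:ℚ) else 0) := by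
    intro y
    unfold assoc
    by_cases h1 : adj x y <;> by_cases h2 : y ∈ C0 <;> simp [h1, h2] <;> norm_num
  rw [Finset.sum_congr rfl fun y _ => split y, Finset.sum_add_distrib]
  have c1 : ∑ y : Vtx 12, (if adj x y ∧ y ∈ C0 then (9:ℚ) else 0)
      = ((Finset.univ.filter (fun y => adj x y ∧ y ∈ C0)).card : ℚ) * 9 := by
    rw [← Finset.sum_filter, Finset.sum_const, nsmul_eq_mul]
  have c2 : ∑ y : Vtx 12, (if adj x y ∧ y ∉ C0 then (-7:ℚ) else 0)
      = ((Finset.univ.filter (fun y => adj x y ∧ y ∉ C0)).card : ℚ) * (-7) := by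
    rw [← Finset.sum_filter, Finset.sum_const, nsmul_eq_mul]
  rw [c1, c2]
  by_cases hx : x ∈ C0
  · rw [(h.1 x hx).1, (h.1 x hx).2]
    unfold assoc
    rw [if_pos hx]
    norm_num
  · rw [(h.2 x hx).1, (h.2 x hx).2]
    unfold assoc
    rw [if_neg hx]
    norm_num

lemma support_wt (h : IsEqPartition C0 3 9 7 5) (w : Vtx 12)
    (hw : hat f w ≠ 0) : wt w = 8 := by
  set U : ℚ := ∑ x : Vtx 12, f x * ((-1:ℚ))^(ip x w) with hU
  have hUne : U ≠ 0 := by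
    intro hc
    apply hw
    unfold hat
    rw [← hU, hc, zero_div]
  set D : ℚ := ∑ i : Fin 12, ((-1:ℚ))^((w i).val) with hD
  have key : D * U = -4 * U := by
    have A1 : ∑ x : Vtx 12, (∑ y : Vtx 12, (if adj x y then f y else 0)) * ((-1:ℚ))^(ip x w)
        = -4 * U := by
      rw [Finset.sum_congr rfl fun x _ => by rw [eigen C0 h x]]
      rw [hU, Finset.mul_sum]
      exact Finset.sum_congr rfl fun x _ => by ring
    have A2 : ∑ x : Vtx 12, (∑ y : Vtx 12, (if adj x y then f y else 0)) * ((-1:ℚ))^(ip x w)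
        = D * U := by
      have step1 : ∀ x : Vtx 12, (∑ y : Vtx 12, (if adj x y then f y else 0)) * ((-1:ℚ))^(ip x w)
          = ∑ y : Vtx 12, (if adj x y then f y * ((-1:ℚ))^(ip x w) else 0) := by
        intro x
        rw [Finset.sum_mul]
        exact Finset.sum_congr rfl fun y _ => by split_ifs <;> simp
      rw [Finset.sum_congr rfl fun x _ => step1 x, Finset.sum_comm]
      have inner : ∀ y : Vtx 12, ∑ x : Vtx 12, (if adj x y then f y * ((-1:ℚ))^(ip x w) else 0)
          = f y * ((-1:ℚ))^(ip y w) * D := by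
        intro y
        have : ∀ x : Vtx 12, (if adj x y then f y * ((-1:ℚ))^(ip x w) else 0)
            = f y * (if adj x y then ((-1:ℚ))^(ip x w) else 0) := by
          intro x; split_ifs <;> simp
        rw [Finset.sum_congr rfl fun x _ => this x, ← Finset.mul_sum]
        rw [sum_neighbors y (fun x => ((-1:ℚ))^(ip x w))]
        have : ∀ i : Fin 12, ((-1:ℚ))^(ip (y + ee i) w)
            = ((-1:ℚ))^(ip y w) * ((-1:ℚ))^((w i).val) := by
          intro i; rw [ip_add_left, ip_ee]
        rw [Finset.sum_congr rfl fun i _ => this i, ← Finset.mul_sum, ← hD]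
        ring
      rw [Finset.sum_congr rfl fun y _ => inner y, ← Finset.sum_mul, ← hU]
      ring
    rw [← A1, A2]
  have hDval : D = 12 - 2 * (wt w : ℚ) := by
    have : ∀ i : Fin 12, ((-1:ℚ))^((w i).val) = 1 - 2 * (if w i = 1 then (1:ℚ) else 0) := by
      intro i
      rcases zmod2_cases (w i) with h0 | h1
      · have hne : (0 : ZMod 2) ≠ 1 := by decide
        simp [h0, ZMod.val_zero, hne]
      · simp [h1, val_one']; norm_num
    rw [hD, Finset.sum_congr rfl fun i _ => this i]
    rw [Finset.sum_sub_distrib, Finset.sum_const]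
    
    have : ∑ i : Fin 12, 2 * (if w i = 1 then (1:ℚ) else 0)
        = 2 * ((Finset.univ.filter (fun i => w i = 1)).card : ℚ) := by
      rw [← Finset.mul_sum, Finset.sum_boole]
    rw [this]
    unfold wt
    simp
  have hfac : (D + 4) * U = 0 := by rw [add_mul]; linarith [key]
  have : D + 4 = 0 := by
    rcases mul_eq_zero.mp hfac with h' | h'
    · exact h'
    · exact absurd h' hUne
  rw [hDval] at this
  have : (wt w : ℚ) = 8 := by linarith
  exact_mod_cast this

end Main

lemma adj_comm {n : ℕ} (x y : Vtx n) : adj x y ↔ adj y x := by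
  unfold adj
  have : Finset.univ.filter (fun i => x i ≠ y i) = Finset.univ.filter (fun i => y i ≠ x i) := by
    apply Finset.filter_congr
    intro i _
    exact ⟨Ne.symm, Ne.symm⟩
  rw [this]

section Card
variable (C0 : Finset (Vtx 12))

lemma card_univ_vtx : (Finset.univ : Finset (Vtx 12)).card = 4096 := by
  rw [Finset.card_univ, card_vtx]
  norm_num

lemma cardC0 (h : IsEqPartition C0 3 9 7 5) : C0.card = 1792 := by
  have hle : C0.card ≤ 4096 := by
    have := Finset.card_le_univ C0
    rw [card_vtx] at this
    omega
  have key : 9 * C0.card = 7 * (4096 - C0.card) → C0.card = 1792 := by omega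
  apply key
  have S1 : ∑ x ∈ C0, (Finset.univ.filter (fun y => adj x y ∧ y ∉ C0)).card = 9 * C0.card := by
    rw [Finset.sum_congr rfl (fun x hx => (h.1 x hx).2), Finset.sum_const, smul_eq_mul,
      Nat.mul_comm]
  have S2 : ∑ y ∈ Finset.univ \ C0, (Finset.univ.filter (fun x => adj y x ∧ x ∈ C0)).card
      = 7 * (4096 - C0.card) := by
    rw [Finset.sum_congr rfl (fun y hy => (h.2 y (Finset.mem_sdiff.mp hy).2).1),
      Finset.sum_const, smul_eq_mul, Nat.mul_comm, Finset.card_sdiff_of_subset (Finset.subset_univ C0),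
      card_univ_vtx]
  rw [← S1, ← S2]
  have L : ∀ x : Vtx 12, (Finset.univ.filter (fun y => adj x y ∧ y ∉ C0)).card
      = ∑ y ∈ Finset.univ \ C0, (if adj x y then 1 else 0) := by
    intro x
    rw [Finset.card_filter]
    rw [← Finset.sum_filter_add_sum_filter_not Finset.univ (fun y => y ∉ C0)]
    have h2 : ∑ y ∈ Finset.univ.filter (fun y => ¬ y ∉ C0), (if adj x y ∧ y ∉ C0 then 1 else 0) = 0 := by
      apply Finset.sum_eq_zero
      intro y hy
      have := (Finset.mem_filter.mp hy).2
      simp [this]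
    rw [h2, add_zero]
    have hset : Finset.univ.filter (fun y : Vtx 12 => y ∉ C0) = Finset.univ \ C0 := by
      ext y; simp
    rw [hset]
    apply Finset.sum_congr rfl
    intro y hy
    have : y ∉ C0 := (Finset.mem_sdiff.mp hy).2
    simp [this]
  have R : ∀ y : Vtx 12, (Finset.univ.filter (fun x => adj y x ∧ x ∈ C0)).card
      = ∑ x ∈ C0, (if adj x y then 1 else 0) := by
    intro y
    rw [Finset.card_filter]
    rw [← Finset.sum_filter_add_sum_filter_not Finset.univ (fun x => x ∈ C0)]
    have h2 : ∑ x ∈ Finset.univ.filter (fun x => ¬ x ∈ C0), (if adj y x ∧ x ∈ C0 then 1 else 0) = 0 := by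
      apply Finset.sum_eq_zero
      intro x hx
      have := (Finset.mem_filter.mp hx).2
      simp [this]
    rw [h2, add_zero]
    have hset : Finset.univ.filter (fun x : Vtx 12 => x ∈ C0) = C0 := by
      ext x; simp
    rw [hset]
    apply Finset.sum_congr rfl
    intro x hx
    simp [hx, adj_comm y x]
  rw [Finset.sum_congr rfl (fun x _ => L x), Finset.sum_congr rfl (fun y _ => R y)]
  exact Finset.sum_comm

lemma sumsq (h : IsEqPartition C0 3 9 7 5) :
    ∑ y : Vtx 12, (hat (assoc C0 9 7) y)^2 = 63 := by
  rw [parseval]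
  have hval : ∀ z : Vtx 12, (assoc C0 9 7 z)^2 = 49 + (if z ∈ C0 then (32:ℚ) else 0) := by
    intro z
    unfold assoc
    split_ifs <;> norm_num
  rw [Finset.sum_congr rfl fun z _ => hval z, Finset.sum_add_distrib, Finset.sum_const]
  have : ∑ z : Vtx 12, (if z ∈ C0 then (32:ℚ) else 0) = 32 * (C0.card : ℚ) := by
    rw [← Finset.sum_filter]
    have hset : Finset.univ.filter (fun z : Vtx 12 => z ∈ C0) = C0 := by ext z; simp
    rw [hset, Finset.sum_const, nsmul_eq_mul]
    ring
  rw [this, cardC0 C0 h, card_univ_vtx]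
  norm_num

end Card

-- ## subcubes and blocks

def cube (T : Finset (Fin 12)) : Finset (Vtx 12) :=
  Finset.univ.filter (fun z => ∀ i, i ∉ T → z i = 0)

def zs (y : Vtx 12) : Finset (Fin 12) := Finset.univ.filter (fun i => y i = 0)

def xB (B : Finset (Fin 12)) : Vtx 12 := fun i => if i ∈ B then 0 else 1

lemma xB_zs (y : Vtx 12) : xB (zs y) = y := by
  funext i
  unfold xB zs
  by_cases hi : y i = 0
  · simp [hi]
  · have h1 : y i = 1 := (zmod2_cases (y i)).resolve_left hi
    simp [hi, h1]

lemma zs_xB (B : Finset (Fin 12)) : zs (xB B) = B := by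
  unfold zs xB
  ext i
  by_cases hi : i ∈ B <;> simp [hi]

lemma wt_zs (y : Vtx 12) : wt y + (zs y).card = 12 := by
  unfold wt zs
  have hc : ∀ i : Fin 12, y i = 1 ↔ ¬ (y i = 0) := by
    intro i
    rcases zmod2_cases (y i) with h | h <;> rw [h] <;> simp <;> decide
  rw [Finset.filter_congr (fun i _ => hc i)]
  have key := Finset.card_filter_add_card_filter_not
    (s := (Finset.univ : Finset (Fin 12))) (p := fun i => y i = 0)
  simp only [Finset.card_univ, Fintype.card_fin] at key
  omega

lemma card_cube (T : Finset (Fin 12)) : (cube T).card = 2^T.card := by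
  have key : (cube T).card = Fintype.card (↥T → ZMod 2) := by
    rw [← Finset.card_univ]
    refine Finset.card_bij' (fun z _ => fun t : ↥T => z t.1)
      (fun g _ => fun idx => if hidx : idx ∈ T then g ⟨idx, hidx⟩ else 0)
      (fun z hz => Finset.mem_univ _) (fun g hg => ?_) (fun z hz => ?_) (fun g hg => ?_)
    · unfold cube
      rw [Finset.mem_filter]
      refine ⟨Finset.mem_univ _, ?_⟩
      intro i hi
      simp [hi]
    · funext idx
      by_cases hidx : idx ∈ T
      · simp [hidx]
      · simp only [dif_neg hidx]
        exact ((Finset.mem_filter.mp hz).2 idx hidx).symm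
    · funext t
      simp [t.2]
  rw [key, Fintype.card_fun, Fintype.card_coe]
  norm_num

lemma cube_chi_sum (T : Finset (Fin 12)) (y : Vtx 12) :
    ∑ z ∈ cube T, ((-1:ℚ))^(ip z y)
      = if (∀ i ∈ T, y i = 0) then (2:ℚ)^T.card else 0 := by
  by_cases hy : ∀ i ∈ T, y i = 0
  · rw [if_pos hy]
    have hone : ∀ z ∈ cube T, ((-1:ℚ))^(ip z y) = 1 := by
      intro z hz
      have hz' := (Finset.mem_filter.mp hz).2
      have : ip z y = 0 := by
        unfold ip
        apply Finset.sum_eq_zero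
        intro i _
        by_cases hi : i ∈ T
        · rw [hy i hi, ZMod.val_zero, Nat.mul_zero]
        · rw [hz' i hi, ZMod.val_zero, Nat.zero_mul]
      rw [this, pow_zero]
    rw [Finset.sum_congr rfl hone, Finset.sum_const, card_cube]
    simp
  · rw [if_neg hy]
    push_neg at hy
    obtain ⟨i₀, hi₀T, hi₀⟩ := hy
    have hi₀1 : y i₀ = 1 := (zmod2_cases (y i₀)).resolve_left hi₀
    have hmap : ∀ z ∈ cube T, z + ee i₀ ∈ cube T := by
      intro z hz
      have hz' := (Finset.mem_filter.mp hz).2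
      unfold cube
      rw [Finset.mem_filter]
      refine ⟨Finset.mem_univ _, ?_⟩
      intro i hi
      show z i + ee i₀ i = 0
      have hne : i ≠ i₀ := fun hc => hi (hc ▸ hi₀T)
      rw [hz' i hi]
      simp [ee, hne]
    have reindex : ∑ z ∈ cube T, ((-1:ℚ))^(ip z y)
        = ∑ z ∈ cube T, ((-1:ℚ))^(ip (z + ee i₀) y) := by
      apply Finset.sum_nbij' (fun z => z + ee i₀) (fun z => z + ee i₀)
        <;> intro z hz
      · exact hmap z hz
      · exact hmap z hz
      · rw [add_assoc, add_self_eq_zero', add_zero]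
      · rw [add_assoc, add_self_eq_zero', add_zero]
      · rw [add_assoc, add_self_eq_zero', add_zero]
    have flip : ∀ z : Vtx 12, ((-1:ℚ))^(ip (z + ee i₀) y) = -((-1:ℚ))^(ip z y) := by
      intro z
      rw [ip_add_left, ip_ee, hi₀1, val_one']
      ring
    rw [Finset.sum_congr rfl (fun z _ => flip z)] at reindex
    rw [Finset.sum_neg_distrib] at reindex
    linarith

section FaceSum
variable (C0 : Finset (Vtx 12))

local notation "f" => assoc C0 9 7

lemma cube_sum_hat (T : Finset (Fin 12)) :
    ∑ z ∈ cube T, f z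
      = (2:ℚ)^T.card * ∑ y : Vtx 12, (if (∀ i ∈ T, y i = 0) then hat f y else 0) := by
  have hinv : ∀ z ∈ cube T, f z = ∑ y : Vtx 12, hat f y * ((-1:ℚ))^(ip z y) :=
    fun z _ => inversion _ z
  rw [Finset.sum_congr rfl hinv, Finset.sum_comm, Finset.mul_sum]
  apply Finset.sum_congr rfl
  intro y _
  rw [← Finset.mul_sum, cube_chi_sum]
  split_ifs with hcond <;> ring

lemma cube_sum_val (T : Finset (Fin 12)) :
    ∑ z ∈ cube T, f z
      = 9 * 2^T.card - 16 * (((cube T).filter (fun z => z ∉ C0)).card : ℚ) := by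
  have hval : ∀ z ∈ cube T, f z = 9 - 16 * (if z ∉ C0 then (1:ℚ) else 0) := by
    intro z _
    unfold assoc
    by_cases hz : z ∈ C0 <;> simp [hz] <;> norm_num
  rw [Finset.sum_congr rfl hval, Finset.sum_sub_distrib, Finset.sum_const, ← Finset.mul_sum,
    Finset.sum_boole, card_cube]
  push_cast
  ring

lemma hat_restrict (h : IsEqPartition C0 3 9 7 5) (T : Finset (Fin 12)) :
    ∑ y : Vtx 12, (if (∀ i ∈ T, y i = 0) then hat f y else 0)
      = ∑ B ∈ (Finset.powersetCard 4 (Finset.univ : Finset (Fin 12))).filter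
          (fun B => T ⊆ B), hat f (xB B) := by
  rw [← Finset.sum_filter]
  rw [← Finset.sum_filter_of_ne
    (p := fun y : Vtx 12 => hat f y ≠ 0) (fun x _ hx => hx)]
  conv_rhs => rw [← Finset.sum_filter_of_ne
    (p := fun B : Finset (Fin 12) => hat f (xB B) ≠ 0) (fun x _ hx => hx)]
  apply Finset.sum_nbij' (fun y => zs y) (fun B => xB B)
  · intro y hy
    rw [Finset.mem_filter] at hy ⊢
    obtain ⟨hy1, hy2⟩ := hy
    rw [Finset.mem_filter] at hy1
    obtain ⟨_, hcond⟩ := hy1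
    have hwt : wt y = 8 := support_wt C0 h y hy2
    have hcard : (zs y).card = 4 := by have := wt_zs y; omega
    refine ⟨Finset.mem_filter.mpr ⟨Finset.mem_powersetCard_univ.mpr hcard, ?_⟩, ?_⟩
    · intro i hi
      unfold zs
      rw [Finset.mem_filter]
      exact ⟨Finset.mem_univ _, hcond i hi⟩
    · rw [xB_zs]; exact hy2
  · intro B hB
    rw [Finset.mem_filter] at hB ⊢
    obtain ⟨hB1, hB2⟩ := hB
    rw [Finset.mem_filter] at hB1
    obtain ⟨_, hsub⟩ := hB1
    refine ⟨Finset.mem_filter.mpr ⟨Finset.mem_univ _, ?_⟩, hB2⟩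
    intro i hi
    unfold xB
    simp [hsub hi]
  · intro y _; exact xB_zs y
  · intro B _; exact zs_xB B
  · intro y _; rw [xB_zs]

lemma hat_block_int (h : IsEqPartition C0 3 9 7 5) (B : Finset (Fin 12)) (hB : B.card = 4) :
    ∃ k : ℕ, hat f (xB B) = 9 - (k:ℚ) := by
  have hsing : (Finset.powersetCard 4 (Finset.univ : Finset (Fin 12))).filter
      (fun B' => B ⊆ B') = {B} := by
    ext B'
    rw [Finset.mem_filter, Finset.mem_powersetCard_univ, Finset.mem_singleton]
    constructor
    · rintro ⟨hc, hs⟩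
      exact (Finset.eq_of_subset_of_card_le hs (by omega)).symm
    · intro hEq
      rw [hEq]
      exact ⟨hB, Finset.Subset.refl B⟩
  have key := (cube_sum_hat C0 B).symm.trans (cube_sum_val C0 B)
  rw [hat_restrict C0 h B, hsing, Finset.sum_singleton, hB] at key
  refine ⟨((cube B).filter (fun z => z ∉ C0)).card, ?_⟩
  have h16 : (2:ℚ)^4 = 16 := by norm_num
  rw [h16] at key
  linarith

lemma sigma_odd (h : IsEqPartition C0 3 9 7 5) (T : Finset (Fin 12)) (hT : T.card = 3 ∨ T.card = 2) :
    ∃ k : ℕ, ∑ B ∈ (Finset.powersetCard 4 (Finset.univ : Finset (Fin 12))).filter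
          (fun B => T ⊆ B), hat f (xB B) = 9 - 2 * (k:ℚ) := by
  have key := (cube_sum_hat C0 T).symm.trans (cube_sum_val C0 T)
  rw [hat_restrict C0 h T] at key
  rcases hT with hT | hT
  · refine ⟨((cube T).filter (fun z => z ∉ C0)).card, ?_⟩
    rw [hT] at key
    norm_num at key
    linarith
  · refine ⟨2 * ((cube T).filter (fun z => z ∉ C0)).card, ?_⟩
    rw [hT] at key
    norm_num at key
    push_cast
    linarith

end FaceSum

-- ## integer coefficients

def cInt (C0 : Finset (Vtx 12)) (B : Finset (Fin 12)) : ℤ :=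
  9 - (((cube B).filter (fun z => z ∉ C0)).card : ℤ)

section IntLayer
variable (C0 : Finset (Vtx 12))

local notation "f" => assoc C0 9 7
local notation "P4" => Finset.powersetCard 4 (Finset.univ : Finset (Fin 12))
local notation "P3" => Finset.powersetCard 3 (Finset.univ : Finset (Fin 12))
local notation "P2" => Finset.powersetCard 2 (Finset.univ : Finset (Fin 12))

lemma hat_eq_cInt (h : IsEqPartition C0 3 9 7 5) (B : Finset (Fin 12)) (hB : B.card = 4) :
    hat f (xB B) = (cInt C0 B : ℚ) := by
  have hsing : (Finset.powersetCard 4 (Finset.univ : Finset (Fin 12))).filter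
      (fun B' => B ⊆ B') = {B} := by
    ext B'
    rw [Finset.mem_filter, Finset.mem_powersetCard_univ, Finset.mem_singleton]
    constructor
    · rintro ⟨hc, hs⟩
      exact (Finset.eq_of_subset_of_card_le hs (by omega)).symm
    · intro hEq
      rw [hEq]
      exact ⟨hB, Finset.Subset.refl B⟩
  have key := (cube_sum_hat C0 B).symm.trans (cube_sum_val C0 B)
  rw [hat_restrict C0 h B, hsing, Finset.sum_singleton, hB] at key
  unfold cInt
  push_cast
  have h16 : (2:ℚ)^4 = 16 := by norm_num
  rw [h16] at key
  linarith

lemma odd_iff_cast (n : ℤ) : Odd n ↔ (n : ZMod 2) = 1 := by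
  rw [Int.odd_iff]
  constructor
  · intro h1
    have : n = 2 * (n / 2) + 1 := by omega
    rw [this]
    push_cast
    rw [show ((2:ZMod 2)) = 0 by decide]
    ring
  · intro hc
    by_contra hn
    have h0 : n % 2 = 0 := by omega
    have : (2:ℤ) ∣ n := by omega
    have := (ZMod.intCast_zmod_eq_zero_iff_dvd n 2).mpr this
    rw [this] at hc
    exact absurd hc (by decide)

lemma sum_parity {α : Type*} (s : Finset α) (g : α → ℤ) :
    ((∑ a ∈ s, g a : ℤ) : ZMod 2) = ((s.filter (fun a => Odd (g a))).card : ZMod 2) := by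
  push_cast
  have : ∀ a ∈ s, ((g a : ZMod 2)) = (if Odd (g a) then 1 else 0) := by
    intro a _
    by_cases ha : Odd (g a)
    · rw [if_pos ha, (odd_iff_cast _).mp ha]
    · rw [if_neg ha]
      have : (2:ℤ) ∣ g a := by
        rw [Int.odd_iff] at ha
        omega
      exact (ZMod.intCast_zmod_eq_zero_iff_dvd _ 2).mpr this
  rw [Finset.sum_congr rfl this, Finset.sum_boole]

lemma odd_sum_iff_odd_card {α : Type*} (s : Finset α) (g : α → ℤ)
    (h : Odd (∑ a ∈ s, g a)) : Odd ((s.filter (fun a => Odd (g a))).card) := by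
  have hcast := sum_parity s g
  rw [(odd_iff_cast _).mp h] at hcast
  rw [Nat.odd_iff]
  by_contra hc
  have hdvd : (2:ℕ) ∣ (s.filter (fun a => Odd (g a))).card := by omega
  have h0 : ((s.filter (fun a => Odd (g a))).card : ZMod 2) = 0 :=
    (ZMod.natCast_eq_zero_iff _ 2).mpr hdvd
  rw [h0] at hcast
  exact absurd hcast (by decide)
end IntLayer

def PP (k : ℕ) : Finset (Finset (Fin 12)) := Finset.powersetCard k Finset.univ

section IntLayer2
variable (C0 : Finset (Vtx 12))

lemma sum_sq_blocks (h : IsEqPartition C0 3 9 7 5) :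
    ∑ B ∈ PP 4, (cInt C0 B)^2 = 63 := by
  have hq : ∑ B ∈ PP 4, ((cInt C0 B : ℚ))^2 = 63 := by
    have h1 : ∑ y : Vtx 12, (hat (assoc C0 9 7) y)^2
        = ∑ B ∈ PP 4, (hat (assoc C0 9 7) (xB B))^2 := by
      rw [← Finset.sum_filter_of_ne (s := (Finset.univ : Finset (Vtx 12)))
        (f := fun y => (hat (assoc C0 9 7) y)^2)
        (p := fun y : Vtx 12 => hat (assoc C0 9 7) y ≠ 0)
        (fun x _ hx => by
          intro hc
          exact hx (by beta_reduce; rw [hc]; ring))]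
      conv_rhs => rw [← Finset.sum_filter_of_ne (s := PP 4)
        (f := fun B => (hat (assoc C0 9 7) (xB B))^2)
        (p := fun B : Finset (Fin 12) => hat (assoc C0 9 7) (xB B) ≠ 0)
        (fun x _ hx => by
          intro hc
          exact hx (by beta_reduce; rw [hc]; ring))]
      apply Finset.sum_nbij' (fun y => zs y) (fun B => xB B)
      · intro y hy
        rw [Finset.mem_filter] at hy ⊢
        obtain ⟨_, hy2⟩ := hy
        have hwt : wt y = 8 := support_wt C0 h y hy2
        have hcard : (zs y).card = 4 := by have := wt_zs y; omega
        refine ⟨Finset.mem_powersetCard_univ.mpr hcard, ?_⟩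
        rw [xB_zs]; exact hy2
      · intro B hB
        rw [Finset.mem_filter] at hB ⊢
        exact ⟨Finset.mem_univ _, hB.2⟩
      · intro y _; exact xB_zs y
      · intro B _; exact zs_xB B
      · intro y _; rw [xB_zs]
    have h2 := sumsq C0 h
    rw [h1] at h2
    rw [← h2]
    apply Finset.sum_congr rfl
    intro B hB
    rw [hat_eq_cInt C0 h B (Finset.mem_powersetCard_univ.mp hB)]
  exact_mod_cast hq

lemma sigma_odd_int (h : IsEqPartition C0 3 9 7 5) (T : Finset (Fin 12))
    (hT : T.card = 3 ∨ T.card = 2) :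
    Odd (∑ B ∈ (PP 4).filter (fun B => T ⊆ B), cInt C0 B) := by
  obtain ⟨k, hk⟩ := sigma_odd C0 h T hT
  have hq : ((∑ B ∈ (PP 4).filter (fun B => T ⊆ B), cInt C0 B : ℤ) : ℚ) = 9 - 2*(k:ℚ) := by
    push_cast
    rw [← hk]
    apply Finset.sum_congr rfl
    intro B hB
    rw [Finset.mem_filter] at hB
    rw [hat_eq_cInt C0 h B (Finset.mem_powersetCard_univ.mp hB.1)]
  have hz : (∑ B ∈ (PP 4).filter (fun B => T ⊆ B), cInt C0 B) = 9 - 2*(k:ℤ) := by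
    exact_mod_cast hq
  exact ⟨4 - k, by omega⟩

end IntLayer2

-- ## design counting

def nT (O : Finset (Finset (Fin 12))) (T : Finset (Fin 12)) : ℕ :=
  (O.filter (fun B => T ⊆ B)).card

section Design
variable (O : Finset (Finset (Fin 12)))

lemma count_i (S : Finset (Fin 12)) (i : Fin 12) (hi : i ∈ S) :
    ((Finset.powersetCard 3 S).filter (fun T => i ∈ T)).card = (S.card - 1).choose 2 := by
  have key : ((Finset.powersetCard 3 S).filter (fun T => i ∈ T)).card
      = (Finset.powersetCard 2 (S.erase i)).card := by
    refine Finset.card_bij' (fun T _ => T.erase i) (fun T' _ => insert i T')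
      (fun T hT => ?_) (fun T' hT' => ?_) (fun T hT => ?_) (fun T' hT' => ?_)
    · rw [Finset.mem_filter, Finset.mem_powersetCard] at hT
      obtain ⟨⟨hsub, hcard⟩, hiT⟩ := hT
      rw [Finset.mem_powersetCard]
      exact ⟨Finset.erase_subset_erase i hsub, by rw [Finset.card_erase_of_mem hiT, hcard]⟩
    · rw [Finset.mem_powersetCard] at hT'
      obtain ⟨hsub, hcard⟩ := hT'
      have hiT' : i ∉ T' := fun hc => Finset.notMem_erase i S (hsub hc)
      rw [Finset.mem_filter, Finset.mem_powersetCard]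
      refine ⟨⟨?_, ?_⟩, Finset.mem_insert_self i T'⟩
      · intro a ha
        rcases Finset.mem_insert.mp ha with rfl | ha'
        · exact hi
        · exact Finset.mem_of_mem_erase (hsub ha')
      · rw [Finset.card_insert_of_notMem hiT', hcard]
    · rw [Finset.mem_filter] at hT
      exact Finset.insert_erase hT.2
    · rw [Finset.mem_powersetCard] at hT'
      have hiT' : i ∉ T' := fun hc => Finset.notMem_erase i S (hT'.1 hc)
      exact Finset.erase_insert hiT'
  rw [key, Finset.card_powersetCard, Finset.card_erase_of_mem hi]

lemma sum_nT (hO : ∀ B ∈ O, B.card = 4) : ∑ T ∈ PP 3, nT O T = 4 * O.card := by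
  unfold nT
  rw [Finset.sum_congr rfl (fun T (_ : T ∈ PP 3) => Finset.card_filter _ _), Finset.sum_comm]
  have inner : ∀ B ∈ O, (∑ T ∈ PP 3, if T ⊆ B then 1 else 0) = 4 := by
    intro B hB
    rw [← Finset.card_filter]
    have hset : (PP 3).filter (fun T => T ⊆ B) = Finset.powersetCard 3 B := by
      ext T
      rw [Finset.mem_filter, Finset.mem_powersetCard]
      unfold PP
      rw [Finset.mem_powersetCard_univ]
      tauto
    rw [hset, Finset.card_powersetCard, hO B hB]
    rfl
  rw [Finset.sum_congr rfl inner, Finset.sum_const, smul_eq_mul, Nat.mul_comm]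

lemma sum_nT_i (hO : ∀ B ∈ O, B.card = 4) (i : Fin 12) :
    ∑ T ∈ (PP 3).filter (fun T => i ∈ T), nT O T
      = 3 * (O.filter (fun B => i ∈ B)).card := by
  unfold nT
  rw [Finset.sum_congr rfl (fun T _ => Finset.card_filter _ _), Finset.sum_comm]
  have inner : ∀ B ∈ O, (∑ T ∈ (PP 3).filter (fun T => i ∈ T), if T ⊆ B then 1 else 0)
      = if i ∈ B then 3 else 0 := by
    intro B hB
    rw [← Finset.card_filter]
    have hset : ((PP 3).filter (fun T => i ∈ T)).filter (fun T => T ⊆ B)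
        = (Finset.powersetCard 3 B).filter (fun T => i ∈ T) := by
      ext T
      rw [Finset.mem_filter, Finset.mem_filter, Finset.mem_filter, Finset.mem_powersetCard]
      unfold PP
      rw [Finset.mem_powersetCard_univ]
      tauto
    rw [hset]
    by_cases hiB : i ∈ B
    · rw [if_pos hiB, count_i B i hiB, hO B hB]; rfl
    · rw [if_neg hiB]
      apply Finset.card_eq_zero.mpr
      apply Finset.filter_eq_empty_iff.mpr
      intro T hT
      rw [Finset.mem_powersetCard] at hT
      exact fun hc => hiB (hT.1 hc)
  rw [Finset.sum_congr rfl inner, Finset.sum_ite, Finset.sum_const, Finset.sum_const]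
  simp [Nat.mul_comm]

end Design

section Design2
variable (O : Finset (Finset (Fin 12)))

lemma sum_nT_pair (hO : ∀ B ∈ O, B.card = 4) (P : Finset (Fin 12)) (hP : P.card = 2) :
    ∑ j ∈ Finset.univ \ P, nT O (insert j P) = 2 * nT O P := by
  unfold nT
  rw [Finset.sum_congr rfl (fun j _ => Finset.card_filter _ _), Finset.sum_comm]
  have inner : ∀ B ∈ O, (∑ j ∈ Finset.univ \ P, if insert j P ⊆ B then 1 else 0)
      = if P ⊆ B then 2 else 0 := by
    intro B hB
    rw [← Finset.card_filter]
    by_cases hPB : P ⊆ B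
    · rw [if_pos hPB]
      have hset : (Finset.univ \ P).filter (fun j => insert j P ⊆ B) = B \ P := by
        ext j
        rw [Finset.mem_filter, Finset.mem_sdiff, Finset.mem_sdiff, Finset.insert_subset_iff]
        constructor
        · rintro ⟨⟨_, hjP⟩, hjB, _⟩
          exact ⟨hjB, hjP⟩
        · rintro ⟨hjB, hjP⟩
          exact ⟨⟨Finset.mem_univ _, hjP⟩, hjB, hPB⟩
      rw [hset, Finset.card_sdiff_of_subset hPB, hO B hB, hP]
    · rw [if_neg hPB]
      apply Finset.card_eq_zero.mpr
      apply Finset.filter_eq_empty_iff.mpr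
      intro j _
      rw [Finset.insert_subset_iff]
      exact fun hc => hPB hc.2
  rw [Finset.sum_congr rfl inner, Finset.sum_ite, Finset.sum_const, Finset.sum_const]
  simp [Nat.mul_comm]

lemma card_P3 : (PP 3).card = 220 := by
  unfold PP
  rw [Finset.card_powersetCard, Finset.card_univ, Fintype.card_fin]
  rfl

lemma card_P3_i (i : Fin 12) : ((PP 3).filter (fun T => i ∈ T)).card = 55 := by
  unfold PP
  rw [count_i Finset.univ i (Finset.mem_univ i), Finset.card_univ, Fintype.card_fin]
  rfl

lemma main_count (hO : ∀ B ∈ O, B.card = 4)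
    (h3 : ∀ T ∈ PP 3, Odd (nT O T)) (h2 : ∀ P ∈ PP 2, Odd (nT O P)) :
    63 ≤ O.card := by
  classical
  set x : Finset (Fin 12) → ℕ := fun T => nT O T / 2 with hxdef
  have hnx : ∀ T ∈ PP 3, nT O T = 2 * x T + 1 := by
    intro T hT
    have := h3 T hT
    rw [Nat.odd_iff] at this
    simp only [hxdef]
    omega
  -- point sums
  have hX : ∀ i : Fin 12, (∑ T ∈ (PP 3).filter (fun T => i ∈ T), x T) % 3 = 1 := by
    intro i
    have hsum := sum_nT_i O hO i
    rw [Finset.sum_congr rfl (fun T hT => hnx T (Finset.mem_filter.mp hT).1)] at hsum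
    rw [Finset.sum_add_distrib, ← Finset.mul_sum, Finset.sum_const, card_P3_i i] at hsum
    simp only [smul_eq_mul, Nat.mul_one] at hsum
    omega
  have hXne1 : ∀ i : Fin 12, (∑ T ∈ (PP 3).filter (fun T => i ∈ T), x T) ≠ 1 := by
    intro i h1
    have hpos : ∃ T₀ ∈ (PP 3).filter (fun T => i ∈ T), x T₀ ≠ 0 := by
      by_contra hc
      push_neg at hc
      rw [Finset.sum_eq_zero hc] at h1
      exact absurd h1 (by norm_num)
    obtain ⟨T₀, hT₀mem, hT₀⟩ := hpos
    have hsplit := Finset.add_sum_erase _ x hT₀mem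
    rw [h1] at hsplit
    have hx1 : x T₀ = 1 := by omega
    have hzero : ∑ T ∈ ((PP 3).filter (fun T => i ∈ T)).erase T₀, x T = 0 := by omega
    have hrest : ∀ T ∈ ((PP 3).filter (fun T => i ∈ T)).erase T₀, x T = 0 :=
      fun T hT => Finset.sum_eq_zero_iff.mp hzero T hT
    have hT₀f := Finset.mem_filter.mp hT₀mem
    have hT₀c : T₀.card = 3 := Finset.mem_powersetCard_univ.mp hT₀f.1
    have hiT₀ : i ∈ T₀ := hT₀f.2
    have hne : (T₀.erase i).Nonempty := by
      rw [← Finset.card_pos, Finset.card_erase_of_mem hiT₀, hT₀c]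
      norm_num
    obtain ⟨j, hj⟩ := hne
    have hji : j ≠ i := Finset.ne_of_mem_erase hj
    have hjT₀ : j ∈ T₀ := Finset.mem_of_mem_erase hj
    set P := T₀.erase j with hPdef
    have hPc : P.card = 2 := by
      rw [hPdef, Finset.card_erase_of_mem hjT₀, hT₀c]
    have hiP : i ∈ P := Finset.mem_erase.mpr ⟨fun hc => hji hc.symm, hiT₀⟩
    have hPmem : P ∈ PP 2 := Finset.mem_powersetCard_univ.mpr hPc
    have hjP : j ∉ P := Finset.notMem_erase j T₀
    have hpair := sum_nT_pair O hO P hPc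
    have hins : ∀ j' ∈ Finset.univ \ P, (insert j' P) ∈ (PP 3).filter (fun T => i ∈ T) := by
      intro j' hj'
      have hj'P : j' ∉ P := (Finset.mem_sdiff.mp hj').2
      refine Finset.mem_filter.mpr ⟨Finset.mem_powersetCard_univ.mpr ?_, Finset.mem_insert_of_mem hiP⟩
      rw [Finset.card_insert_of_notMem hj'P, hPc]
    rw [Finset.sum_congr rfl
      (fun j' hj' => hnx _ (Finset.mem_filter.mp (hins j' hj')).1)] at hpair
    rw [Finset.sum_add_distrib, ← Finset.mul_sum, Finset.sum_const] at hpair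
    have hcard10 : (Finset.univ \ P).card = 10 := by
      rw [Finset.card_sdiff_of_subset (Finset.subset_univ _), Finset.card_univ, Fintype.card_fin, hPc]
    have hYval : (∑ j' ∈ Finset.univ \ P, x (insert j' P)) = 1 := by
      rw [Finset.sum_eq_single_of_mem j
        (Finset.mem_sdiff.mpr ⟨Finset.mem_univ j, hjP⟩)]
      · rw [show insert j P = T₀ from Finset.insert_erase hjT₀, hx1]
      · intro j' hj' hne'
        apply hrest
        refine Finset.mem_erase.mpr ⟨?_, hins j' hj'⟩
        intro hc
        have hjmem : j ∈ insert j' P := hc ▸ hjT₀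
        rcases Finset.mem_insert.mp hjmem with h' | h'
        · exact hne' (h' ▸ rfl)
        · exact hjP h'
    have hodd := h2 P hPmem
    rw [Nat.odd_iff] at hodd
    rw [hYval, hcard10] at hpair
    simp only [smul_eq_mul, Nat.mul_one] at hpair
    omega
  have hX4 : ∀ i : Fin 12, 4 ≤ ∑ T ∈ (PP 3).filter (fun T => i ∈ T), x T := by
    intro i
    have := hX i
    have := hXne1 i
    omega
  have hdouble : ∑ i : Fin 12, (∑ T ∈ (PP 3).filter (fun T => i ∈ T), x T)
      = 3 * ∑ T ∈ PP 3, x T := by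
    have step : ∀ i : Fin 12, (∑ T ∈ (PP 3).filter (fun T => i ∈ T), x T)
        = ∑ T ∈ PP 3, (if i ∈ T then x T else 0) := fun i => Finset.sum_filter _ _
    rw [Finset.sum_congr rfl (fun i _ => step i), Finset.sum_comm]
    rw [Finset.mul_sum]
    apply Finset.sum_congr rfl
    intro T hT
    rw [← Finset.sum_filter]
    have hset : Finset.univ.filter (fun i => i ∈ T) = T := by
      ext i; simp
    rw [hset, Finset.sum_const, smul_eq_mul, Finset.mem_powersetCard_univ.mp hT]
  have hlow : 48 ≤ ∑ i : Fin 12, (∑ T ∈ (PP 3).filter (fun T => i ∈ T), x T) := by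
    calc (48:ℕ) = ∑ _i : Fin 12, 4 := by simp
    _ ≤ _ := Finset.sum_le_sum (fun i _ => hX4 i)
  have htot := sum_nT O hO
  rw [Finset.sum_congr rfl hnx, Finset.sum_add_distrib, ← Finset.mul_sum,
    Finset.sum_const, card_P3] at htot
  simp only [smul_eq_mul, Nat.mul_one] at htot
  omega

end Design2

-- ## endgame

section End
variable (C0 : Finset (Vtx 12))

lemma xB_injective : Function.Injective xB :=
  Function.LeftInverse.injective (g := zs) zs_xB

lemma endgame (h : IsEqPartition C0 3 9 7 5) :
    ∃ O : Finset (Finset (Fin 12)),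
      (∀ B ∈ O, B.card = 4) ∧
      O.card = 63 ∧
      (∀ B ∈ O, cInt C0 B = 1 ∨ cInt C0 B = -1) ∧
      (∀ B ∈ PP 4, B ∉ O → cInt C0 B = 0) ∧
      (∀ T ∈ PP 3, Odd (nT O T)) ∧
      (∀ B ∈ O, Odd (cInt C0 B)) := by
  classical
  set O : Finset (Finset (Fin 12)) := (PP 4).filter (fun B => Odd (cInt C0 B)) with hOdef
  have hO : ∀ B ∈ O, B.card = 4 := by
    intro B hB
    exact Finset.mem_powersetCard_univ.mp (Finset.mem_filter.mp hB).1
  have hOmem : ∀ B ∈ O, Odd (cInt C0 B) := fun B hB => (Finset.mem_filter.mp hB).2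
  have hcount : ∀ (T : Finset (Fin 12)), nT O T
      = (((PP 4).filter (fun B => T ⊆ B)).filter (fun B => Odd (cInt C0 B))).card := by
    intro T
    unfold nT
    congr 1
    ext B
    simp only [Finset.mem_filter, hOdef]
    tauto
  have h3 : ∀ T ∈ PP 3, Odd (nT O T) := by
    intro T hT
    rw [hcount]
    exact odd_sum_iff_odd_card _ _
      (sigma_odd_int C0 h T (Or.inl (Finset.mem_powersetCard_univ.mp hT)))
  have h2 : ∀ P ∈ PP 2, Odd (nT O P) := by
    intro P hP
    rw [hcount]
    exact odd_sum_iff_odd_card _ _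
      (sigma_odd_int C0 h P (Or.inr (Finset.mem_powersetCard_univ.mp hP)))
  have hge := main_count O hO h3 h2
  have hps := sum_sq_blocks C0 h
  rw [← Finset.sum_filter_add_sum_filter_not (PP 4) (fun B => Odd (cInt C0 B))] at hps
  rw [← hOdef] at hps
  have hO1 : ∀ B ∈ O, 1 ≤ (cInt C0 B)^2 := by
    intro B hB
    have hodd := hOmem B hB
    have hne : cInt C0 B ≠ 0 := by
      intro hc
      rw [hc] at hodd
      exact (Int.not_odd_iff_even.mpr ⟨0, rfl⟩) hodd
    have : cInt C0 B ≥ 1 ∨ cInt C0 B ≤ -1 := by omega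
    rcases this with h' | h' <;> nlinarith
  have hlow : (O.card : ℤ) ≤ ∑ B ∈ O, (cInt C0 B)^2 := by
    calc (O.card : ℤ) = ∑ _B ∈ O, (1:ℤ) := by simp
    _ ≤ _ := Finset.sum_le_sum hO1
  have hrest_nonneg : 0 ≤ ∑ B ∈ (PP 4).filter (fun B => ¬ Odd (cInt C0 B)), (cInt C0 B)^2 :=
    Finset.sum_nonneg (fun B _ => sq_nonneg _)
  have hub : (O.card : ℤ) ≤ 63 := by linarith
  have hlb : (63:ℤ) ≤ (O.card : ℤ) := by exact_mod_cast hge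
  have hcard63 : O.card = 63 := by omega
  have hsumO : ∑ B ∈ O, (cInt C0 B)^2 = 63 := by
    have hlb2 : (63:ℤ) ≤ ∑ B ∈ O, (cInt C0 B)^2 := by
      calc (63:ℤ) = (O.card:ℤ) := by exact_mod_cast hcard63.symm
      _ ≤ _ := hlow
    linarith
  have hrest0 : ∑ B ∈ (PP 4).filter (fun B => ¬ Odd (cInt C0 B)), (cInt C0 B)^2 = 0 := by
    linarith
  have hzero : ∀ B ∈ PP 4, B ∉ O → cInt C0 B = 0 := by
    intro B hB hBO
    have hmem : B ∈ (PP 4).filter (fun B => ¬ Odd (cInt C0 B)) := by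
      rw [Finset.mem_filter]
      refine ⟨hB, fun hodd => hBO ?_⟩
      rw [hOdef]
      exact Finset.mem_filter.mpr ⟨hB, hodd⟩
    have := (Finset.sum_eq_zero_iff_of_nonneg
      (fun B _ => sq_nonneg (cInt C0 B))).mp hrest0 B hmem
    exact pow_eq_zero_iff (n := 2) (by norm_num) |>.mp this
  have hpm : ∀ B ∈ O, cInt C0 B = 1 ∨ cInt C0 B = -1 := by
    intro B hB
    have hdiff : ∑ B ∈ O, ((cInt C0 B)^2 - 1) = 0 := by
      rw [Finset.sum_sub_distrib, hsumO, Finset.sum_const, hcard63]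
      norm_num
    have hnn : ∀ B ∈ O, 0 ≤ (cInt C0 B)^2 - 1 := fun B hB => by
      have := hO1 B hB; omega
    have hsq1 := (Finset.sum_eq_zero_iff_of_nonneg hnn).mp hdiff B hB
    have hsq : (cInt C0 B)^2 = 1 := by omega
    have hfac : (cInt C0 B - 1) * (cInt C0 B + 1) = 0 := by nlinarith
    rcases mul_eq_zero.mp hfac with h' | h'
    · left; omega
    · right; omega
  exact ⟨O, hO, hcard63, hpm, hzero, h3, hOmem⟩

end End

lemma xB_zero_iff (T B : Finset (Fin 12)) : (∀ i ∈ T, xB B i = 0) ↔ T ⊆ B := by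
  constructor
  · intro hz i hi
    by_contra hc
    have : xB B i = 1 := by unfold xB; rw [if_neg hc]
    rw [hz i hi] at this
    exact absurd this (by decide)
  · intro hsub i hi
    unfold xB
    rw [if_pos (hsub hi)]

theorem stmt14 (C0 : Finset (Vtx 12)) (h : IsEqPartition C0 3 9 7 5) :
    (nonzeros C0).card = 63 ∧
    (∀ x ∈ nonzeros C0, wt x = 8 ∧
      (hat (assoc C0 9 7) x = 1 ∨ hat (assoc C0 9 7) x = -1)) ∧
    (∀ T : Finset (Fin 12), T.card = 3 → Odd (cnt C0 T)) ∧
    ∑ T ∈ Finset.powersetCard 3 (Finset.univ : Finset (Fin 12)),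
        (cnt C0 T - 1) = 2 * 16 := by
  classical
  obtain ⟨O, hO4, hOcard, hpm, hzero, h3, hOodd⟩ := endgame C0 h
  have himg : nonzeros C0 = O.image xB := by
    ext y
    unfold nonzeros
    rw [Finset.mem_filter]
    simp only [Finset.mem_univ, true_and]
    constructor
    · intro hy
      have hwt := support_wt C0 h y hy
      have hcard : (zs y).card = 4 := by have := wt_zs y; omega
      have hmemP4 : zs y ∈ PP 4 := Finset.mem_powersetCard_univ.mpr hcard
      have hhat : hat (assoc C0 9 7) y = (cInt C0 (zs y) : ℚ) := by
        conv_lhs => rw [← xB_zs y]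
        exact hat_eq_cInt C0 h (zs y) hcard
      have hcne : cInt C0 (zs y) ≠ 0 := by
        intro hc
        apply hy
        rw [hhat, hc]
        norm_num
      have hmemO : zs y ∈ O := by
        by_contra hc
        exact hcne (hzero _ hmemP4 hc)
      rw [Finset.mem_image]
      exact ⟨zs y, hmemO, xB_zs y⟩
    · intro hy
      rw [Finset.mem_image] at hy
      obtain ⟨B, hB, rfl⟩ := hy
      rw [hat_eq_cInt C0 h B (hO4 B hB)]
      rcases hpm B hB with h' | h' <;> rw [h'] <;> norm_num
  have hcnt : ∀ T : Finset (Fin 12), cnt C0 T = nT O T := by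
    intro T
    unfold cnt nT
    rw [himg]
    have hfilt : (O.image xB).filter (fun x => ∀ i ∈ T, x i = 0)
        = (O.filter (fun B => T ⊆ B)).image xB := by
      ext y
      rw [Finset.mem_filter, Finset.mem_image, Finset.mem_image]
      constructor
      · rintro ⟨⟨B, hB, rfl⟩, hcond⟩
        exact ⟨B, Finset.mem_filter.mpr ⟨hB, (xB_zero_iff T B).mp hcond⟩, rfl⟩
      · rintro ⟨B, hB, rfl⟩
        have hB' := Finset.mem_filter.mp hB
        exact ⟨⟨B, hB'.1, rfl⟩, (xB_zero_iff T B).mpr hB'.2⟩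
    rw [hfilt, Finset.card_image_of_injective _ xB_injective]
  refine ⟨?_, ?_, ?_, ?_⟩
  · rw [himg, Finset.card_image_of_injective _ xB_injective, hOcard]
  · intro x hx
    have hhatne : hat (assoc C0 9 7) x ≠ 0 := by
      unfold nonzeros at hx
      exact (Finset.mem_filter.mp hx).2
    refine ⟨support_wt C0 h x hhatne, ?_⟩
    rw [himg, Finset.mem_image] at hx
    obtain ⟨B, hB, rfl⟩ := hx
    rw [hat_eq_cInt C0 h B (hO4 B hB)]
    rcases hpm B hB with h' | h' <;> rw [h']
    · left; norm_num
    · right; norm_num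
  · intro T hT
    rw [hcnt]
    exact h3 T (Finset.mem_powersetCard_univ.mpr hT)
  · have hPP : Finset.powersetCard 3 (Finset.univ : Finset (Fin 12)) = PP 3 := rfl
    rw [hPP, Finset.sum_congr rfl (fun T (_ : T ∈ PP 3) => by rw [hcnt T])]
    have htot := sum_nT O hO4
    rw [hOcard] at htot
    have hpos : ∀ T ∈ PP 3, 1 ≤ nT O T := by
      intro T hT
      obtain ⟨k, hk⟩ := h3 T hT
      omega
    have hsplit : ∑ T ∈ PP 3, (nT O T - 1) + (PP 3).card = ∑ T ∈ PP 3, nT O T := by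
      have hcardsum : (PP 3).card = ∑ _T ∈ PP 3, 1 := by
        rw [Finset.sum_const, smul_eq_mul, Nat.mul_one]
      rw [hcardsum, ← Finset.sum_add_distrib]
      apply Finset.sum_congr rfl
      intro T hT
      have := hpos T hT
      omega
    rw [card_P3] at hsplit
    omega
end
end

section
/- In the covering system of 63 blocks arising from an equitable 2-partition of Q_{12} with quotient matrix [[3,9],[7,5]], each pair of distinct coordinates belongs to an even number (0, 2, or 4) of bitriples. -/
attribute [local instance] Classical.propDecidable
noncomputable section

namespace FDF


/-- sign character on ZMod 2 -/
def sgn (a : ZMod 2) : ℚ := if a = 0 then 1 else -1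

lemma sgn_zero : sgn 0 = 1 := rfl
lemma sgn_one : sgn 1 = -1 := rfl

lemma two_eq_zero : (1 + 1 : ZMod 2) = 0 := by decide

lemma zmod2_cases (a : ZMod 2) : a = 0 ∨ a = 1 := by
  fin_cases a
  · exact Or.inl rfl
  · exact Or.inr rfl

lemma sgn_add (a b : ZMod 2) : sgn (a + b) = sgn a * sgn b := by
  rcases zmod2_cases a with h | h <;> rcases zmod2_cases b with h' | h' <;>
    subst h <;> subst h' <;> simp [sgn, two_eq_zero] <;> norm_num

lemma sgn_cases (a : ZMod 2) : sgn a = 1 ∨ sgn a = -1 := by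
  rcases zmod2_cases a with h | h <;> subst h <;> simp [sgn]

lemma sgn_sq (a : ZMod 2) : sgn a * sgn a = 1 := by
  rcases sgn_cases a with h | h <;> rw [h] <;> norm_num

lemma val_one : (1 : ZMod 2).val = 1 := rfl

/-- bilinear form -/
def β {n : ℕ} (x y : Vtx n) : ZMod 2 := ∑ i, x i * y i

lemma β_add_left {n : ℕ} (x z y : Vtx n) : β (x + z) y = β x y + β z y := by
  simp [β, add_mul, Finset.sum_add_distrib]

lemma β_comm {n : ℕ} (x y : Vtx n) : β x y = β y x := by
  simp [β, mul_comm]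

lemma sgn_mul_val (a b : ZMod 2) : (-1 : ℚ) ^ (a.val * b.val) = sgn (a * b) := by
  rcases zmod2_cases a with h | h <;> rcases zmod2_cases b with h' | h' <;>
    subst h <;> subst h' <;> simp [sgn, val_one]

lemma pow_ip_eq_sgn {n : ℕ} (z y : Vtx n) : (-1 : ℚ) ^ ip z y = sgn (β z y) := by
  rw [ip, β, ← Finset.prod_pow_eq_pow_sum]
  induction (Finset.univ : Finset (Fin n)) using Finset.induction with
  | empty => simp [sgn]
  | insert _ _ h ih =>
      rw [Finset.prod_insert h, Finset.sum_insert h, sgn_add, ih, sgn_mul_val]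



/-- standard basis vector -/
def e {n : ℕ} (i : Fin n) : Vtx n := Pi.single i 1

lemma β_e {n : ℕ} (i : Fin n) (y : Vtx n) : β (e i) y = y i := by
  rw [β]
  rw [Finset.sum_eq_single i]
  · simp [e]
  · intro j _ hj
    simp [e, Pi.single_apply, hj]
  · simp

lemma sum_translate {n : ℕ} (g : Vtx n → ℚ) (a : Vtx n) :
    ∑ x, g (x + a) = ∑ x, g x := by
  exact Fintype.sum_equiv (Equiv.addRight a) _ _ (fun x => rfl)

lemma orth {n : ℕ} (y : Vtx n) (hy : y ≠ 0) : ∑ x, sgn (β x y) = 0 := by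
  have : ∃ i, y i ≠ 0 := by
    by_contra hc
    push_neg at hc
    exact hy (funext hc)
  obtain ⟨i, hi⟩ := this
  have hy1 : y i = 1 := (zmod2_cases (y i)).resolve_left hi
  have h1 : ∑ x, sgn (β x y) = ∑ x, sgn (β (x + e i) y) :=
    (sum_translate (fun x => sgn (β x y)) (e i)).symm
  have h2 : ∀ x : Vtx n, sgn (β (x + e i) y) = - sgn (β x y) := by
    intro x
    rw [β_add_left, sgn_add, β_e, hy1, show sgn 1 = -1 from rfl]
    ring
  rw [Finset.sum_congr rfl (fun x _ => h2 x)] at h1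
  rw [Finset.sum_neg_distrib] at h1
  linarith [h1]



lemma sgn_zero' : sgn 0 = 1 := rfl

lemma vtx_add_self {n : ℕ} (x : Vtx n) : x + x = 0 := by
  funext i
  rcases zmod2_cases (x i) with h | h <;> simp [h] <;> decide

lemma β_add_right {n : ℕ} (x y z : Vtx n) : β x (y + z) = β x y + β x z := by
  rw [β_comm, β_add_left, β_comm y x, β_comm z x]

lemma hat_eq {n : ℕ} (f : Vtx n → ℚ) (y : Vtx n) :
    hat f y = (∑ z, f z * sgn (β z y)) / 2 ^ n := by
  unfold hat
  congr 1
  exact Finset.sum_congr rfl (fun z _ => by rw [pow_ip_eq_sgn])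

/-- vanishing sets -/
def AU {n : ℕ} (U : Finset (Fin n)) : Finset (Vtx n) :=
  Finset.univ.filter (fun y => ∀ i ∈ U, y i = 0)

lemma card_vanish {n : ℕ} (s : Finset (Fin n)) :
    (AU s).card = 2 ^ (n - s.card) := by
  classical
  have key : (AU s).card = (Finset.univ : Finset ({i : Fin n // i ∉ s} → ZMod 2)).card := by
    apply Finset.card_nbij' (fun y => fun j : {i : Fin n // i ∉ s} => y j.1)
      (fun g => fun i => if h : i ∈ s then 0 else g ⟨i, h⟩)
    · intro y _
      exact Finset.mem_univ _
    · intro g _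
      simp only [AU, Finset.mem_coe, Finset.mem_filter, Finset.mem_univ, true_and]
      intro i hi
      simp [hi]
    · intro y hy
      simp only [AU, Finset.mem_coe, Finset.mem_filter, Finset.mem_univ, true_and] at hy
      funext i
      by_cases hi : i ∈ s
      · simp [hi, (hy i hi).symm]
      · simp [hi]
    · intro g _
      funext j
      simp [j.2]
  rw [key, Finset.card_univ, Fintype.card_fun]
  have : Fintype.card {i : Fin n // i ∉ s} = n - s.card := by
    rw [Fintype.card_subtype]
    have : Finset.univ.filter (fun i : Fin n => i ∉ s) = sᶜ := by
      ext i; simp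
    rw [this, Finset.card_compl, Fintype.card_fin]
  rw [this, ZMod.card]

/-- inner orthogonality over the subgroup AU -/
lemma orth_sub {n : ℕ} (U : Finset (Fin n)) (z : Vtx n) :
    ∑ y ∈ AU U, sgn (β z y)
      = if (∀ i, i ∉ U → z i = 0) then (2 ^ (n - U.card) : ℚ) else 0 := by
  by_cases hz : ∀ i, i ∉ U → z i = 0
  · rw [if_pos hz]
    have : ∀ y ∈ AU U, sgn (β z y) = 1 := by
      intro y hy
      simp only [AU, Finset.mem_filter, Finset.mem_univ, true_and] at hy
      have : β z y = 0 := by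
        rw [β]
        apply Finset.sum_eq_zero
        intro i _
        by_cases hi : i ∈ U
        · rw [hy i hi, mul_zero]
        · rw [hz i hi, zero_mul]
      rw [this, sgn_zero']
    rw [Finset.sum_congr rfl this, Finset.sum_const, card_vanish, nsmul_eq_mul]
    push_cast
    ring
  · rw [if_neg hz]
    push_neg at hz
    obtain ⟨i, hiU, hzi⟩ := hz
    have hz1 : z i = 1 := (zmod2_cases (z i)).resolve_left hzi
    -- involution y ↦ y + e i on AU U
    have hmem : ∀ y ∈ AU U, y + e i ∈ AU U := by
      intro y hy
      simp only [AU, Finset.mem_filter, Finset.mem_univ, true_and] at hy ⊢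
      intro j hj
      have hji : j ≠ i := fun hh => hiU (hh ▸ hj)
      simp [e, Pi.single_apply, hji, hy j hj]
    have hsum : ∑ y ∈ AU U, sgn (β z y) = ∑ y ∈ AU U, sgn (β z (y + e i)) := by
      apply Finset.sum_nbij' (fun y => y + e i) (fun y => y + e i) hmem hmem
      · intro y _
        rw [add_assoc, vtx_add_self, add_zero]
      · intro y _
        rw [add_assoc, vtx_add_self, add_zero]
      · intro y _
        rw [add_assoc, vtx_add_self, add_zero]
    have hflip : ∀ y : Vtx n, sgn (β z (y + e i)) = - sgn (β z y) := by
      intro y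
      rw [β_add_right, sgn_add, β_comm z (e i), β_e, hz1, show sgn 1 = -1 from rfl]
      ring
    rw [Finset.sum_congr rfl (fun y _ => hflip y)] at hsum
    rw [Finset.sum_neg_distrib] at hsum
    linarith


def ZU {n : ℕ} (U : Finset (Fin n)) : Finset (Vtx n) :=
  Finset.univ.filter (fun z => ∀ i, i ∉ U → z i = 0)

lemma proj {n : ℕ} (f : Vtx n → ℚ) (U : Finset (Fin n)) :
    ∑ y ∈ AU U, hat f y = (∑ z ∈ ZU U, f z) / 2 ^ U.card := by
  have hu : U.card ≤ n := by
    simpa using Finset.card_le_card (Finset.subset_univ U)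
  have step1 : ∑ y ∈ AU U, hat f y
      = (∑ z, f z * (∑ y ∈ AU U, sgn (β z y))) / 2 ^ n := by
    rw [Finset.sum_congr rfl (fun y _ => hat_eq f y), ← Finset.sum_div]
    congr 1
    rw [Finset.sum_comm]
    exact Finset.sum_congr rfl (fun z _ => by rw [Finset.mul_sum])
  rw [step1]
  have step2 : ∑ z, f z * (∑ y ∈ AU U, sgn (β z y))
      = ∑ z ∈ ZU U, f z * (2 ^ (n - U.card) : ℚ) := by
    rw [Finset.sum_congr rfl (fun z (_ : z ∈ Finset.univ) => by rw [orth_sub U z])]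
    rw [← Finset.sum_filter_add_sum_filter_not Finset.univ (fun z : Vtx n => ∀ i, i ∉ U → z i = 0)]
    have z1 : ∀ z ∈ Finset.univ.filter (fun z : Vtx n => ∀ i, i ∉ U → z i = 0),
        f z * (if (∀ i, i ∉ U → z i = 0) then (2 ^ (n - U.card) : ℚ) else 0)
          = f z * (2 ^ (n - U.card) : ℚ) := by
      intro z hz
      simp only [Finset.mem_filter] at hz
      rw [if_pos hz.2]
    have z2 : ∀ z ∈ Finset.univ.filter (fun z : Vtx n => ¬ (∀ i, i ∉ U → z i = 0)),
        f z * (if (∀ i, i ∉ U → z i = 0) then (2 ^ (n - U.card) : ℚ) else 0) = 0 := by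
      intro z hz
      simp only [Finset.mem_filter] at hz
      rw [if_neg hz.2, mul_zero]
    rw [Finset.sum_congr rfl z1, Finset.sum_congr rfl z2, Finset.sum_const_zero, add_zero]
    rfl
  rw [step2, ← Finset.sum_mul]
  rw [div_eq_div_iff (by positivity) (by positivity)]
  rw [mul_assoc, ← pow_add, Nat.sub_add_cancel hu]

lemma wt_sgn_sum {n : ℕ} (y : Vtx n) :
    ∑ i, sgn (y i) = (n : ℚ) - 2 * ((Finset.univ.filter (fun i => y i = 1)).card : ℚ) := by
  have : ∀ i, sgn (y i) = 1 - 2 * (if y i = 1 then (1:ℚ) else 0) := by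
    intro i
    rcases zmod2_cases (y i) with h | h <;> rw [h] <;> norm_num [sgn] <;> decide
  rw [Finset.sum_congr rfl (fun i _ => this i), Finset.sum_sub_distrib]
  rw [← Finset.mul_sum, Finset.sum_boole, Finset.sum_const, Finset.card_univ, Fintype.card_fin]
  simp [nsmul_eq_mul]

lemma sum_translate_mul {n : ℕ} (f : Vtx n → ℚ) (y a : Vtx n) :
    ∑ x, f (x + a) * sgn (β x y) = sgn (β a y) * ∑ x, f x * sgn (β x y) := by
  have h1 : ∀ x : Vtx n, f (x + a) * sgn (β x y)
      = sgn (β a y) * (f (x + a) * sgn (β (x + a) y)) := by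
    intro x
    rw [β_add_left, sgn_add]
    calc f (x + a) * sgn (β x y)
        = f (x + a) * sgn (β x y) * (sgn (β a y) * sgn (β a y)) := by
          rw [sgn_sq, mul_one]
      _ = sgn (β a y) * (f (x + a) * (sgn (β x y) * sgn (β a y))) := by ring
  rw [Finset.sum_congr rfl (fun x _ => h1 x), ← Finset.mul_sum]
  congr 1
  exact sum_translate (fun x => f x * sgn (β x y)) a

/-- support of hat is on weight 8 (in dimension 12, eigenvalue -4) -/
lemma support_wt8 (f : Vtx 12 → ℚ) (heig : ∀ x, ∑ i, f (x + e i) = -4 * f x)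
    (y : Vtx 12) (hy : hat f y ≠ 0) :
    (Finset.univ.filter (fun i => y i = 1)).card = 8 := by
  have hSne : (∑ z, f z * sgn (β z y)) ≠ 0 := by
    intro h0
    exact hy (by rw [hat_eq, h0, zero_div])
  have key : ∀ i : Fin 12, ∑ z, f (z + e i) * sgn (β z y)
      = sgn (y i) * ∑ z, f z * sgn (β z y) := by
    intro i
    rw [sum_translate_mul, β_e]
  have lhs : ∑ z, (∑ i, f (z + e i)) * sgn (β z y)
      = (∑ i, sgn (y i)) * ∑ z, f z * sgn (β z y) := by
    have hh : ∀ z : Vtx 12, (∑ i, f (z + e i)) * sgn (β z y)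
        = ∑ i, f (z + e i) * sgn (β z y) := fun z => Finset.sum_mul _ _ _
    rw [Finset.sum_congr rfl (fun z _ => hh z), Finset.sum_comm]
    rw [Finset.sum_congr rfl (fun i (_ : i ∈ Finset.univ) => key i), ← Finset.sum_mul]
  have rhs : ∑ z, (∑ i, f (z + e i)) * sgn (β z y)
      = -4 * ∑ z, f z * sgn (β z y) := by
    have hh : ∀ z : Vtx 12, (∑ i, f (z + e i)) * sgn (β z y)
        = -4 * (f z * sgn (β z y)) := by
      intro z
      rw [heig z]
      ring
    rw [Finset.sum_congr rfl (fun z _ => hh z), ← Finset.mul_sum]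
  have hval : (∑ i, sgn (y i)) = -4 := mul_right_cancel₀ hSne (lhs.symm.trans rhs)
  rw [wt_sgn_sum y] at hval
  have : ((Finset.univ.filter (fun i => y i = 1)).card : ℚ) = 8 := by
    push_cast at hval ⊢
    linarith
  exact_mod_cast this



lemma sgn_zero2 : sgn 0 = 1 := rfl

lemma card_vtx (n : ℕ) : Fintype.card (Vtx n) = 2 ^ n := by
  rw [show Fintype.card (Vtx n) = Fintype.card (Fin n → ZMod 2) from rfl, Fintype.card_fun]
  rw [ZMod.card, Fintype.card_fin]

lemma orth_full {n : ℕ} (w : Vtx n) :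
    ∑ y, sgn (β w y) = if w = 0 then ((2 ^ n : ℕ) : ℚ) else 0 := by
  by_cases hw : w = 0
  · subst hw
    rw [if_pos rfl]
    have : ∀ y : Vtx n, sgn (β 0 y) = 1 := by
      intro y
      have : β 0 y = 0 := by simp [β]
      rw [this, sgn_zero2]
    rw [Finset.sum_congr rfl (fun y _ => this y), Finset.sum_const, Finset.card_univ,
      card_vtx, nsmul_eq_mul, mul_one]
  · rw [if_neg hw]
    have : ∀ y : Vtx n, sgn (β w y) = sgn (β y w) := fun y => by rw [β_comm]
    rw [Finset.sum_congr rfl (fun y _ => this y)]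
    exact orth w hw

lemma add_eq_zero_iff_eq {n : ℕ} (x y : Vtx n) : x + y = 0 ↔ x = y := by
  constructor
  · intro hxy
    have := congrArg (· + y) hxy
    simpa [add_assoc, vtx_add_self] using this
  · rintro rfl
    exact vtx_add_self x

lemma inversion {n : ℕ} (f : Vtx n → ℚ) (x : Vtx n) :
    ∑ y, hat f y * sgn (β x y) = f x := by
  have step1 : ∀ y : Vtx n, hat f y * sgn (β x y)
      = (∑ z, f z * sgn (β (z + x) y)) / 2 ^ n := by
    intro y
    rw [hat_eq, div_mul_eq_mul_div, Finset.sum_mul]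
    congr 1
    apply Finset.sum_congr rfl
    intro z _
    rw [β_add_left, sgn_add]
    ring
  rw [Finset.sum_congr rfl (fun y _ => step1 y), ← Finset.sum_div, Finset.sum_comm]
  have step2 : ∀ z : Vtx n, ∑ y, f z * sgn (β (z + x) y)
      = if z = x then f z * ((2 ^ n : ℕ) : ℚ) else 0 := by
    intro z
    rw [← Finset.mul_sum, orth_full]
    by_cases hz : z = x
    · rw [if_pos ((add_eq_zero_iff_eq z x).mpr hz), if_pos hz]
    · rw [if_neg (fun hc => hz ((add_eq_zero_iff_eq z x).mp hc)), if_neg hz, mul_zero]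
  rw [Finset.sum_congr rfl (fun z _ => step2 z)]
  rw [Finset.sum_ite_eq' Finset.univ x (fun z => f z * ((2 ^ n : ℕ) : ℚ))]
  rw [if_pos (Finset.mem_univ x)]
  have h2 : ((2 ^ n : ℕ) : ℚ) ≠ 0 := by positivity
  field_simp
  simp

/-- second moment -/
lemma moment2 {n : ℕ} (s : Finset (Vtx n)) (c : Vtx n → ℚ) :
    ∑ x, (∑ y ∈ s, c y * sgn (β x y)) ^ 2 = ((2 ^ n : ℕ) : ℚ) * ∑ y ∈ s, (c y) ^ 2 := by
  have expand : ∀ x : Vtx n, (∑ y ∈ s, c y * sgn (β x y)) ^ 2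
      = ∑ y1 ∈ s, ∑ y2 ∈ s, c y1 * c y2 * sgn (β x (y1 + y2)) := by
    intro x
    rw [sq, Finset.sum_mul_sum]
    apply Finset.sum_congr rfl
    intro y1 _
    apply Finset.sum_congr rfl
    intro y2 _
    rw [β_add_right, sgn_add, β_comm x y1, β_comm x y2]
    ring
  rw [Finset.sum_congr rfl (fun x _ => expand x), Finset.sum_comm]
  have inner : ∀ y1 ∈ s, ∑ x, ∑ y2 ∈ s, c y1 * c y2 * sgn (β x (y1 + y2))
      = c y1 ^ 2 * ((2 ^ n : ℕ) : ℚ) := by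
    intro y1 hy1
    rw [Finset.sum_comm]
    have perY2 : ∀ y2 ∈ s, ∑ x, c y1 * c y2 * sgn (β x (y1 + y2))
        = if y2 = y1 then c y1 ^ 2 * ((2 ^ n : ℕ) : ℚ) else 0 := by
      intro y2 _
      rw [← Finset.mul_sum]
      have : ∑ x, sgn (β x (y1 + y2)) = if y1 + y2 = 0 then ((2 ^ n : ℕ) : ℚ) else 0 := by
        have hc : ∀ x : Vtx n, sgn (β x (y1 + y2)) = sgn (β (y1 + y2) x) :=
          fun x => by rw [β_comm]
        rw [Finset.sum_congr rfl (fun x _ => hc x), orth_full]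
      rw [this]
      by_cases hy : y2 = y1
      · subst hy
        rw [if_pos (vtx_add_self y2), if_pos rfl]
        ring
      · rw [if_neg (fun hc => hy ((add_eq_zero_iff_eq y1 y2).mp hc).symm), if_neg hy, mul_zero]
    rw [Finset.sum_congr rfl perY2, Finset.sum_ite_eq' s y1 (fun _ => c y1 ^ 2 * ((2 ^ n : ℕ) : ℚ))]
    rw [if_pos hy1]
  rw [Finset.sum_congr rfl inner, ← Finset.sum_mul]
  ring

/-- third moment -/
lemma moment3 {n : ℕ} (s : Finset (Vtx n)) (c : Vtx n → ℚ)
    (hvanish : ∀ y1 ∈ s, ∀ y2 ∈ s, ∀ y3 ∈ s,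
      c y1 ≠ 0 → c y2 ≠ 0 → c y3 ≠ 0 → y1 + y2 + y3 ≠ 0) :
    ∑ x, (∑ y ∈ s, c y * sgn (β x y)) ^ 3 = 0 := by
  have expand : ∀ x : Vtx n, (∑ y ∈ s, c y * sgn (β x y)) ^ 3
      = ∑ y1 ∈ s, ∑ y2 ∈ s, ∑ y3 ∈ s, c y1 * c y2 * c y3 * sgn (β x (y1 + y2 + y3)) := by
    intro x
    rw [pow_succ, sq, Finset.sum_mul_sum]
    rw [show (∑ p ∈ s, ∑ q ∈ s, c p * sgn (β x p) * (c q * sgn (β x q))) * (∑ y ∈ s, c y * sgn (β x y))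
        = ∑ p ∈ s, (∑ q ∈ s, c p * sgn (β x p) * (c q * sgn (β x q))) * (∑ y ∈ s, c y * sgn (β x y))
      from Finset.sum_mul _ _ _]
    apply Finset.sum_congr rfl
    intro y1 _
    rw [Finset.sum_mul]
    apply Finset.sum_congr rfl
    intro y2 _
    rw [Finset.mul_sum]
    apply Finset.sum_congr rfl
    intro y3 _
    rw [β_add_right, β_add_right, sgn_add, sgn_add, β_comm x y1, β_comm x y2, β_comm x y3]
    ring
  rw [Finset.sum_congr rfl (fun x _ => expand x), Finset.sum_comm]
  apply Finset.sum_eq_zero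
  intro y1 hy1
  rw [Finset.sum_comm]
  apply Finset.sum_eq_zero
  intro y2 hy2
  rw [Finset.sum_comm]
  apply Finset.sum_eq_zero
  intro y3 hy3
  by_cases hc : c y1 ≠ 0 ∧ c y2 ≠ 0 ∧ c y3 ≠ 0
  · have hne := hvanish y1 hy1 y2 hy2 y3 hy3 hc.1 hc.2.1 hc.2.2
    rw [← Finset.mul_sum, orth (y1 + y2 + y3) hne, mul_zero]
  · push_neg at hc
    apply Finset.sum_eq_zero
    intro x _
    by_cases h1 : c y1 = 0
    · rw [h1]; ring
    · by_cases h2 : c y2 = 0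
      · rw [h2]; ring
      · rw [hc h1 h2]; ring



lemma zmod2_ne_iff {a b : ZMod 2} : a ≠ b ↔ a = b + 1 := by
  rcases zmod2_cases a with h | h <;> rcases zmod2_cases b with h' | h' <;>
    subst h <;> subst h' <;> simp <;> decide

lemma adj_iff {n : ℕ} (x y : Vtx n) : adj x y ↔ ∃ i, y = x + e i := by
  constructor
  · intro h
    obtain ⟨i, hi⟩ := Finset.card_eq_one.mp h
    refine ⟨i, funext fun j => ?_⟩
    by_cases hj : j = i
    · subst hj
      have : x j ≠ y j := by
        have : j ∈ Finset.univ.filter (fun i => x i ≠ y i) := hi ▸ Finset.mem_singleton_self j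
        exact (Finset.mem_filter.mp this).2
      have := zmod2_ne_iff.mp (Ne.symm this)
      simp [Pi.add_apply, e, Pi.single_apply, this]
    · have : j ∉ Finset.univ.filter (fun i => x i ≠ y i) := by
        rw [hi]; simp [hj]
      simp at this
      simp [Pi.add_apply, e, Pi.single_apply, hj, this]
  · rintro ⟨i, rfl⟩
    have heq : Finset.univ.filter (fun j => x j ≠ (x + e i) j) = {i} := by
      ext j
      simp only [Finset.mem_filter, Finset.mem_univ, true_and, Finset.mem_singleton,
        Pi.add_apply, e, Pi.single_apply]
      by_cases hj : j = i
      · subst hj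
        simp only [if_pos rfl]
        constructor
        · intro _; trivial
        · intro _
          rcases zmod2_cases (x j) with h | h <;> rw [h] <;> decide
      · simp only [if_neg hj, add_zero]
        simp [hj]
    rw [adj, heq, Finset.card_singleton]

lemma adj_comm {n : ℕ} (x y : Vtx n) : adj x y ↔ adj y x := by
  unfold adj
  congr! 3
  exact ne_comm

section Part
variable (C0 : Finset (Vtx 12)) (h : IsEqPartition C0 3 9 7 5)

lemma e_inj {n : ℕ} (x : Vtx n) : Function.Injective (fun i => x + e i) := by
  intro i j hij
  simp only at hij
  have h2 := congrFun (add_left_cancel hij) i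
  by_contra hne
  rw [show (e j) i = 0 by simp [e, Pi.single_apply]; exact fun hh => hne hh] at h2
  rw [show (e i) i = 1 by simp [e]] at h2
  exact one_ne_zero h2

lemma neighbors_eq {n : ℕ} (x : Vtx n) :
    Finset.univ.filter (fun y => adj x y) = Finset.image (fun i => x + e i) Finset.univ := by
  ext y
  simp [adj_iff, eq_comm]

include h in
lemma eigen (x : Vtx 12) : ∑ i, assoc C0 9 7 (x + e i) = -4 * assoc C0 9 7 x := by
  have himg : ∑ i, assoc C0 9 7 (x + e i)
      = ∑ y ∈ Finset.univ.filter (fun y => adj x y), assoc C0 9 7 y := by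
    rw [neighbors_eq, Finset.sum_image (fun i _ j _ hij => e_inj x hij)]
  have hsplit : ∑ y ∈ Finset.univ.filter (fun y => adj x y), assoc C0 9 7 y
      = 9 * ((Finset.univ.filter (fun y => adj x y ∧ y ∈ C0)).card : ℚ)
        - 7 * ((Finset.univ.filter (fun y => adj x y ∧ y ∉ C0)).card : ℚ) := by
    rw [← Finset.sum_filter_add_sum_filter_not (Finset.univ.filter (fun y => adj x y))
      (fun y => y ∈ C0)]
    rw [Finset.filter_filter, Finset.filter_filter]
    have h1 : ∀ y ∈ Finset.univ.filter (fun y => adj x y ∧ y ∈ C0),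
        assoc C0 9 7 y = 9 := by
      intro y hy
      simp only [Finset.mem_filter] at hy
      simp [assoc, hy.2.2]
    have h2 : ∀ y ∈ Finset.univ.filter (fun y => adj x y ∧ y ∉ C0),
        assoc C0 9 7 y = -7 := by
      intro y hy
      simp only [Finset.mem_filter] at hy
      simp [assoc, hy.2.2]
    rw [Finset.sum_congr rfl h1, Finset.sum_congr rfl h2]
    simp [Finset.sum_const, nsmul_eq_mul]
    ring
  rw [himg, hsplit]
  by_cases hx : x ∈ C0
  · rw [(h.1 x hx).1, (h.1 x hx).2]
    simp [assoc, hx]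
    norm_num
  · rw [(h.2 x hx).1, (h.2 x hx).2]
    simp [assoc, hx]
    norm_num

end Part


section Part
variable (C0 : Finset (Vtx 12)) (h : IsEqPartition C0 3 9 7 5)

lemma sum_to_univ (s : Finset (Vtx 12)) (g : Vtx 12 → ℕ) :
    ∑ x ∈ s, g x = ∑ x ∈ Finset.univ, if x ∈ s then g x else 0 := by
  rw [Finset.sum_ite_mem, Finset.univ_inter]

include h in
lemma double_count : 9 * C0.card = 7 * (Finset.univ.filter (fun y => y ∉ C0)).card := by
  have l1 : ∀ x ∈ C0, (Finset.univ.filter (fun y => adj x y ∧ y ∉ C0)).card = 9 :=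
    fun x hx => (h.1 x hx).2
  have l2 : ∀ y ∈ Finset.univ.filter (fun y => y ∉ C0),
      (Finset.univ.filter (fun x => adj y x ∧ x ∈ C0)).card = 7 := by
    intro y hy
    exact (h.2 y (Finset.mem_filter.mp hy).2).1
  have e1 : 9 * C0.card = ∑ x ∈ C0, (Finset.univ.filter (fun y => adj x y ∧ y ∉ C0)).card := by
    rw [Finset.sum_congr rfl l1, Finset.sum_const, smul_eq_mul, mul_comm]
  have e2 : 7 * (Finset.univ.filter (fun y => y ∉ C0)).card
      = ∑ y ∈ Finset.univ.filter (fun y => y ∉ C0),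
          (Finset.univ.filter (fun x => adj y x ∧ x ∈ C0)).card := by
    rw [Finset.sum_congr rfl l2, Finset.sum_const, smul_eq_mul, mul_comm]
  rw [e1, e2]
  have c1 : ∀ x, (Finset.univ.filter (fun y => adj x y ∧ y ∉ C0)).card
      = ∑ y ∈ Finset.univ, if adj x y ∧ y ∉ C0 then 1 else 0 := by
    intro x; rw [Finset.card_filter]
  have c2 : ∀ y, (Finset.univ.filter (fun x => adj y x ∧ x ∈ C0)).card
      = ∑ x ∈ Finset.univ, if adj y x ∧ x ∈ C0 then 1 else 0 := by
    intro y; rw [Finset.card_filter]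
  rw [Finset.sum_congr rfl (fun x _ => c1 x), Finset.sum_congr rfl (fun y _ => c2 y)]
  rw [sum_to_univ C0, sum_to_univ (Finset.univ.filter (fun y => y ∉ C0))]
  have p1 : ∀ x : Vtx 12, (if x ∈ C0 then (∑ y : Vtx 12, if adj x y ∧ y ∉ C0 then 1 else 0) else 0)
      = ∑ y : Vtx 12, if x ∈ C0 ∧ adj x y ∧ y ∉ C0 then 1 else 0 := by
    intro x
    by_cases hx : x ∈ C0 <;> simp [hx]
  have p2 : ∀ y : Vtx 12, (if y ∈ Finset.univ.filter (fun y => y ∉ C0) then (∑ x : Vtx 12, if adj y x ∧ x ∈ C0 then 1 else 0) else 0)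
      = ∑ x : Vtx 12, if x ∈ C0 ∧ adj x y ∧ y ∉ C0 then 1 else 0 := by
    intro y
    by_cases hy : y ∈ C0
    · simp [hy]
    · simp only [Finset.mem_filter, Finset.mem_univ, true_and, hy, not_false_iff, if_true]
      apply Finset.sum_congr rfl
      intro x _
      by_cases hx : x ∈ C0 <;> simp [hx, hy, adj_comm x y]
  rw [Finset.sum_congr rfl (fun x _ => p1 x), Finset.sum_congr rfl (fun y _ => p2 y)]
  rw [Finset.sum_comm]

include h in
lemma sum_f : ∑ x, assoc C0 9 7 x = 0 := by
  have : ∑ x, assoc C0 9 7 x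
      = 9 * (C0.card : ℚ) - 7 * ((Finset.univ.filter (fun y => y ∉ C0)).card : ℚ) := by
    rw [← Finset.sum_filter_add_sum_filter_not Finset.univ (fun x => x ∈ C0)]
    have g1 : ∀ x ∈ Finset.univ.filter (fun x => x ∈ C0), assoc C0 9 7 x = 9 := by
      intro x hx; simp only [Finset.mem_filter] at hx; simp [assoc, hx.2]
    have g2 : ∀ x ∈ Finset.univ.filter (fun x => ¬ x ∈ C0), assoc C0 9 7 x = -7 := by
      intro x hx; simp only [Finset.mem_filter] at hx; simp [assoc, hx.2]
    rw [Finset.sum_congr rfl g1, Finset.sum_congr rfl g2, Finset.sum_const, Finset.sum_const]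
    have : (Finset.univ.filter (fun x => x ∈ C0)) = C0 := by
      ext z; simp
    rw [this]
    simp [nsmul_eq_mul]
    ring
  rw [this]
  have hd := double_count C0 h
  have : (9 : ℚ) * (C0.card : ℚ) = 7 * ((Finset.univ.filter (fun y => y ∉ C0)).card : ℚ) := by
    exact_mod_cast congrArg (fun n : ℕ => (n : ℚ)) hd
  linarith [this]

end Part


lemma wt8_triple (i : Fin 12) (y1 y2 y3 : Vtx 12)
    (h1 : (Finset.univ.filter (fun j => y1 j = 1)).card = 8)
    (h2 : (Finset.univ.filter (fun j => y2 j = 1)).card = 8)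
    (h3 : (Finset.univ.filter (fun j => y3 j = 1)).card = 8)
    (hi1 : y1 i = 0) (hi2 : y2 i = 0) (hi3 : y3 i = 0) :
    y1 + y2 + y3 ≠ 0 := by
  intro hsum
  set cnt : Fin 12 → ℕ := fun j =>
    (if y1 j = 1 then 1 else 0) + (if y2 j = 1 then 1 else 0) + (if y3 j = 1 then 1 else 0)
    with hcntdef
  have hj : ∀ j, y1 j + y2 j + y3 j = 0 := by
    intro j
    have := congrFun hsum j
    simpa using this
  have hle : ∀ j, cnt j ≤ 2 := by
    intro j
    have hjj := hj j
    rcases zmod2_cases (y1 j) with a1 | a1 <;> rcases zmod2_cases (y2 j) with a2 | a2 <;>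
      rcases zmod2_cases (y3 j) with a3 | a3 <;>
      simp only [hcntdef, a1, a2, a3] <;>
      first
        | (rw [a1, a2, a3] at hjj; exact absurd hjj (by decide))
        | norm_num
  have hcnti : cnt i = 0 := by
    simp only [hcntdef, hi1, hi2, hi3]
    norm_num
  have hsum24 : ∑ j, cnt j = 24 := by
    rw [hcntdef]
    rw [Finset.sum_add_distrib, Finset.sum_add_distrib]
    rw [← Finset.card_filter, ← Finset.card_filter, ← Finset.card_filter]
    rw [h1, h2, h3]
  have hub : ∑ j, cnt j ≤ 22 := by
    have hsplit : ∑ j ∈ (Finset.univ : Finset (Fin 12)).erase i, cnt j + cnt i = ∑ j, cnt j :=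
      Finset.sum_erase_add _ _ (Finset.mem_univ i)
    have hb : ∑ j ∈ (Finset.univ : Finset (Fin 12)).erase i, cnt j
        ≤ ((Finset.univ : Finset (Fin 12)).erase i).card * 2 := by
      apply Finset.sum_le_card_nsmul
      intro j _
      exact hle j
    have hcard : ((Finset.univ : Finset (Fin 12)).erase i).card = 11 := by
      rw [Finset.card_erase_of_mem (Finset.mem_univ i)]
      simp
    omega
  omega

section Part
variable (C0 : Finset (Vtx 12)) (h : IsEqPartition C0 3 9 7 5) (i : Fin 12)

def Ai (i : Fin 12) : Finset (Vtx 12) := Finset.univ.filter (fun y : Vtx 12 => y i = 0)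

include h in
lemma r_spec (x : Vtx 12) :
    (assoc C0 9 7 x + assoc C0 9 7 (x + e i)) / 2
      = ∑ y ∈ Ai i, hat (assoc C0 9 7) y * sgn (β x y) := by
  have inv1 := inversion (assoc C0 9 7) x
  have inv2 := inversion (assoc C0 9 7) (x + e i)
  have combine : ∀ y : Vtx 12,
      hat (assoc C0 9 7) y * sgn (β x y) + hat (assoc C0 9 7) y * sgn (β (x + e i) y)
      = if y i = 0 then 2 * (hat (assoc C0 9 7) y * sgn (β x y)) else 0 := by
    intro y
    rw [β_add_left, sgn_add, β_e]
    rcases zmod2_cases (y i) with hy | hy <;> rw [hy]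
    · rw [if_pos rfl, show sgn 0 = 1 from rfl]
      ring
    · rw [if_neg (by decide), show sgn 1 = -1 from rfl]
      ring
  have : assoc C0 9 7 x + assoc C0 9 7 (x + e i)
      = ∑ y, (if y i = 0 then 2 * (hat (assoc C0 9 7) y * sgn (β x y)) else 0) := by
    rw [← Finset.sum_congr rfl (fun y (_ : y ∈ Finset.univ) => combine y)]
    rw [Finset.sum_add_distrib, inv1, inv2]
  rw [this, Finset.sum_ite, Finset.sum_const_zero, add_zero]
  rw [← Finset.mul_sum]
  rw [show (Finset.univ.filter (fun y : Vtx 12 => y i = 0)) = Ai i from rfl]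
  ring

include h in
lemma sum_r (hr : True) : ∑ x, (assoc C0 9 7 x + assoc C0 9 7 (x + e i)) / 2 = 0 := by
  have : ∑ x, (assoc C0 9 7 x + assoc C0 9 7 (x + e i)) / 2
      = ((∑ x, assoc C0 9 7 x) + (∑ x, assoc C0 9 7 (x + e i))) / 2 := by
    rw [← Finset.sum_add_distrib, Finset.sum_div]
  rw [this, sum_translate (assoc C0 9 7) (e i), sum_f C0 h]
  try norm_num

include h in
lemma r_values (x : Vtx 12) :
    ((assoc C0 9 7 x + assoc C0 9 7 (x + e i)) / 2) ^ 3
      = 3 * ((assoc C0 9 7 x + assoc C0 9 7 (x + e i)) / 2) ^ 2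
        + 61 * ((assoc C0 9 7 x + assoc C0 9 7 (x + e i)) / 2) - 63 := by
  unfold assoc
  by_cases h1 : x ∈ C0 <;> by_cases h2 : x + e i ∈ C0 <;>
    simp [h1, h2] <;> norm_num

include h in
lemma W_eq_21 : ∑ y ∈ Ai i, (hat (assoc C0 9 7) y) ^ 2 = 21 := by
  have hvan : ∀ y1 ∈ Ai i, ∀ y2 ∈ Ai i, ∀ y3 ∈ Ai i,
      hat (assoc C0 9 7) y1 ≠ 0 → hat (assoc C0 9 7) y2 ≠ 0 → hat (assoc C0 9 7) y3 ≠ 0 →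
      y1 + y2 + y3 ≠ 0 := by
    intro y1 hy1 y2 hy2 y3 hy3 n1 n2 n3
    simp only [Ai, Finset.mem_filter, Finset.mem_univ, true_and] at hy1 hy2 hy3
    exact wt8_triple i y1 y2 y3
      (support_wt8 _ (eigen C0 h) y1 n1)
      (support_wt8 _ (eigen C0 h) y2 n2)
      (support_wt8 _ (eigen C0 h) y3 n3)
      hy1 hy2 hy3
  have m3 := moment3 (Ai i) (hat (assoc C0 9 7)) hvan
  have m2 := moment2 (Ai i) (hat (assoc C0 9 7))
  -- rewrite moments through r
  have hr3 : ∑ x, ((assoc C0 9 7 x + assoc C0 9 7 (x + e i)) / 2) ^ 3 = 0 := by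
    rw [Finset.sum_congr rfl (fun x (_ : x ∈ Finset.univ) => by rw [r_spec C0 h i x])]
    exact m3
  have hr2 : ∑ x, ((assoc C0 9 7 x + assoc C0 9 7 (x + e i)) / 2) ^ 2
      = 4096 * ∑ y ∈ Ai i, (hat (assoc C0 9 7) y) ^ 2 := by
    rw [Finset.sum_congr rfl (fun x (_ : x ∈ Finset.univ) => by rw [r_spec C0 h i x])]
    rw [m2]
    norm_num
  have hval : ∑ x, ((assoc C0 9 7 x + assoc C0 9 7 (x + e i)) / 2) ^ 3
      = 3 * (∑ x, ((assoc C0 9 7 x + assoc C0 9 7 (x + e i)) / 2) ^ 2)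
        + 61 * (∑ x, (assoc C0 9 7 x + assoc C0 9 7 (x + e i)) / 2)
        - 63 * 4096 := by
    rw [Finset.sum_congr rfl (fun x (_ : x ∈ Finset.univ) => r_values C0 h i x)]
    rw [Finset.sum_sub_distrib, Finset.sum_add_distrib]
    rw [← Finset.mul_sum, ← Finset.mul_sum, Finset.sum_const, Finset.card_univ, card_vtx]
    norm_num
  rw [hr3, hr2, sum_r C0 h i trivial] at hval
  linarith [hval]

end Part



lemma card_sandwich {α : Type*} [Fintype α] [DecidableEq α]
    (A B : Finset α) (k : ℕ) (hA : A ⊆ B) (hk : A.card ≤ k) :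
    ((Finset.powersetCard k (Finset.univ : Finset α)).filter
      (fun T => A ⊆ T ∧ T ⊆ B)).card
      = (B.card - A.card).choose (k - A.card) := by
  rw [← Finset.card_sdiff_of_subset hA, ← Finset.card_powersetCard (k - A.card) (B \ A)]
  apply Finset.card_nbij' (fun T => T \ A) (fun V => V ∪ A)
  · intro T hT
    simp only [Finset.mem_coe, Finset.mem_filter, Finset.mem_powersetCard] at hT ⊢
    obtain ⟨⟨_, hcard⟩, hAT, hTB⟩ := hT
    constructor
    · exact Finset.sdiff_subset_sdiff hTB (Finset.Subset.refl A)
    · rw [Finset.card_sdiff_of_subset hAT, hcard]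
  · intro V hV
    simp only [Finset.mem_coe, Finset.mem_filter, Finset.mem_powersetCard] at hV ⊢
    obtain ⟨hVB, hcard⟩ := hV
    have hdisj : Disjoint V A :=
      Finset.disjoint_of_subset_left hVB Finset.sdiff_disjoint
    refine ⟨⟨Finset.subset_univ _, ?_⟩, ?_, ?_⟩
    · rw [Finset.card_union_of_disjoint hdisj, hcard]
      omega
    · exact Finset.subset_union_right
    · apply Finset.union_subset
      · exact hVB.trans (Finset.sdiff_subset)
      · exact hA
  · intro T hT
    simp only [Finset.mem_coe, Finset.mem_filter, Finset.mem_powersetCard] at hT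
    exact Finset.sdiff_union_of_subset hT.2.1
  · intro V hV
    simp only [Finset.mem_coe, Finset.mem_filter, Finset.mem_powersetCard] at hV
    have hdisj : Disjoint V A :=
      Finset.disjoint_of_subset_left hV.1 Finset.sdiff_disjoint
    exact Finset.union_sdiff_cancel_right hdisj



def Zset (y : Vtx 12) : Finset (Fin 12) := Finset.univ.filter (fun j => y j = 0)
def yS (S : Finset (Fin 12)) : Vtx 12 := fun j => if j ∈ S then 0 else 1
def four : Finset (Finset (Fin 12)) := Finset.powersetCard 4 Finset.univ

lemma yS_Zset (y : Vtx 12) : yS (Zset y) = y := by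
  funext j
  simp only [yS, Zset, Finset.mem_filter, Finset.mem_univ, true_and]
  rcases zmod2_cases (y j) with hy | hy <;> rw [hy] <;> simp

lemma Zset_yS (S : Finset (Fin 12)) : Zset (yS S) = S := by
  ext j
  simp only [Zset, yS, Finset.mem_filter, Finset.mem_univ, true_and]
  by_cases hj : j ∈ S <;> simp [hj]

lemma Zset_card_of_wt8 (y : Vtx 12)
    (h8 : (Finset.univ.filter (fun j => y j = 1)).card = 8) : (Zset y).card = 4 := by
  have hcompl : Zset y = (Finset.univ.filter (fun j => y j = 1))ᶜ := by
    ext j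
    simp only [Zset, Finset.mem_filter, Finset.mem_univ, true_and, Finset.mem_compl]
    rcases zmod2_cases (y j) with hy | hy <;> rw [hy] <;> simp <;> decide
  rw [hcompl, Finset.card_compl, h8]
  simp

section Part
variable (C0 : Finset (Vtx 12)) (h : IsEqPartition C0 3 9 7 5)

include h in
lemma transfer (φ : ℚ → ℚ) (hφ : φ 0 = 0) (U : Finset (Fin 12)) :
    ∑ y ∈ AU U, φ (hat (assoc C0 9 7) y)
      = ∑ S ∈ four.filter (fun S => U ⊆ S), φ (hat (assoc C0 9 7) (yS S)) := by
  have hL : ∑ y ∈ AU U, φ (hat (assoc C0 9 7) y)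
      = ∑ y ∈ (AU U).filter (fun y => φ (hat (assoc C0 9 7) y) ≠ 0),
          φ (hat (assoc C0 9 7) y) :=
    (Finset.sum_filter_of_ne (fun x _ hx => hx)).symm
  have hR : ∑ S ∈ four.filter (fun S => U ⊆ S), φ (hat (assoc C0 9 7) (yS S))
      = ∑ S ∈ (four.filter (fun S => U ⊆ S)).filter
          (fun S => φ (hat (assoc C0 9 7) (yS S)) ≠ 0),
          φ (hat (assoc C0 9 7) (yS S)) :=
    (Finset.sum_filter_of_ne (fun x _ hx => hx)).symm
  rw [hL, hR]
  apply Finset.sum_nbij' Zset yS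
  · intro y hy
    simp only [Finset.mem_filter, AU, Finset.mem_univ, true_and] at hy ⊢
    obtain ⟨hvan, hne⟩ := hy
    have hFne : hat (assoc C0 9 7) y ≠ 0 := by
      intro h0
      apply hne
      rw [h0, hφ]
    have h8 := support_wt8 _ (eigen C0 h) y hFne
    refine ⟨⟨?_, ?_⟩, ?_⟩
    · simp only [four, Finset.mem_powersetCard]
      exact ⟨Finset.subset_univ _, Zset_card_of_wt8 y h8⟩
    · intro i hi
      simp only [Zset, Finset.mem_filter, Finset.mem_univ, true_and]
      exact hvan i hi
    · rw [yS_Zset]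
      exact hne
  · intro S hS
    simp only [Finset.mem_filter, AU, Finset.mem_univ, true_and] at hS ⊢
    obtain ⟨⟨_, hUS⟩, hne⟩ := hS
    refine ⟨?_, hne⟩
    intro i hi
    simp only [yS, if_pos (hUS hi)]
  · intro y _
    exact yS_Zset y
  · intro S _
    exact Zset_yS S
  · intro y _
    rw [yS_Zset]

def aU (U : Finset (Fin 12)) : ℕ := ((ZU U).filter (fun z => z ∈ C0)).card

lemma card_ZU (U : Finset (Fin 12)) : (ZU U : Finset (Vtx 12)).card = 2 ^ U.card := by
  have : (ZU U : Finset (Vtx 12)) = AU Uᶜ := by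
    ext z
    simp only [ZU, AU, Finset.mem_filter, Finset.mem_univ, true_and, Finset.mem_compl]
  rw [this, card_vanish, Finset.card_compl, Fintype.card_fin]
  congr 1
  have : U.card ≤ 12 := by
    simpa using Finset.card_le_card (Finset.subset_univ U)
  omega

lemma sumf_ZU (U : Finset (Fin 12)) :
    ∑ z ∈ ZU U, assoc C0 9 7 z
      = 16 * (aU C0 U : ℚ) - 7 * ((2 : ℚ) ^ U.card) := by
  rw [← Finset.sum_filter_add_sum_filter_not (ZU U) (fun z => z ∈ C0)]
  have g1 : ∀ z ∈ (ZU U).filter (fun z => z ∈ C0), assoc C0 9 7 z = 9 := by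
    intro z hz
    simp only [Finset.mem_filter] at hz
    simp [assoc, hz.2]
  have g2 : ∀ z ∈ (ZU U).filter (fun z => ¬ z ∈ C0), assoc C0 9 7 z = -7 := by
    intro z hz
    simp only [Finset.mem_filter] at hz
    simp [assoc, hz.2]
  rw [Finset.sum_congr rfl g1, Finset.sum_congr rfl g2, Finset.sum_const, Finset.sum_const]
  have hsplit : ((ZU U).filter (fun z => ¬ z ∈ C0)).card
      = 2 ^ U.card - aU C0 U := by
    have := Finset.card_filter_add_card_filter_not (s := ZU U)
      (p := fun z => z ∈ C0)
    rw [card_ZU] at this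
    unfold aU
    omega
  rw [hsplit]
  have hle' : ((ZU U).filter (fun z => z ∈ C0)).card ≤ 2 ^ U.card := by
    rw [← card_ZU U]
    exact Finset.card_le_card (Finset.filter_subset _ _)
  have hle : aU C0 U ≤ 2 ^ U.card := hle'
  rw [nsmul_eq_mul, nsmul_eq_mul, Nat.cast_sub hle]
  unfold aU
  push_cast
  ring

include h in
lemma proj_face (U : Finset (Fin 12)) :
    ∑ y ∈ AU U, hat (assoc C0 9 7) y
      = (16 * (aU C0 U : ℚ) - 7 * ((2:ℚ) ^ U.card)) / 2 ^ U.card := by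
  rw [proj, sumf_ZU]

def M (S : Finset (Fin 12)) : ℤ := (aU C0 S : ℤ) - 7

include h in
lemma hatM (S : Finset (Fin 12)) (hS : S.card = 4) :
    hat (assoc C0 9 7) (yS S) = ((M C0 S : ℤ) : ℚ) := by
  have hsingle : four.filter (fun S' => S ⊆ S') = {S} := by
    ext S'
    simp only [four, Finset.mem_filter, Finset.mem_powersetCard, Finset.mem_singleton]
    constructor
    · rintro ⟨⟨_, hc⟩, hsub⟩
      exact (Finset.eq_of_subset_of_card_le hsub (le_of_eq (hc.trans hS.symm))).symm
    · rintro rfl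
      exact ⟨⟨Finset.subset_univ _, hS⟩, Finset.Subset.refl _⟩
  have := transfer C0 h id rfl S
  simp only [id] at this
  rw [hsingle, Finset.sum_singleton] at this
  rw [← this, proj_face C0 h, hS]
  unfold M
  push_cast
  field_simp
  try ring

include h in
lemma triple_sum (T : Finset (Fin 12)) (hT : T.card = 3) :
    ∑ S ∈ four.filter (fun S => T ⊆ S), M C0 S = 2 * (aU C0 T : ℤ) - 7 := by
  have hq : ((∑ S ∈ four.filter (fun S => T ⊆ S), M C0 S : ℤ) : ℚ)
      = 2 * (aU C0 T : ℚ) - 7 := by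
    push_cast
    have ht := transfer C0 h id rfl T
    simp only [id] at ht
    have hM : ∀ S ∈ four.filter (fun S => T ⊆ S),
        hat (assoc C0 9 7) (yS S) = ((M C0 S : ℤ) : ℚ) := by
      intro S hS
      simp only [four, Finset.mem_filter, Finset.mem_powersetCard] at hS
      exact hatM C0 h S hS.1.2
    rw [Finset.sum_congr rfl hM] at ht
    rw [← ht, proj_face C0 h, hT]
    field_simp
    try ring
  exact_mod_cast hq

include h in
lemma pair_sum (P : Finset (Fin 12)) (hP : P.card = 2) :
    ∑ S ∈ four.filter (fun S => P ⊆ S), M C0 S = 4 * (aU C0 P : ℤ) - 7 := by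
  have hq : ((∑ S ∈ four.filter (fun S => P ⊆ S), M C0 S : ℤ) : ℚ)
      = 4 * (aU C0 P : ℚ) - 7 := by
    push_cast
    have ht := transfer C0 h id rfl P
    simp only [id] at ht
    have hM : ∀ S ∈ four.filter (fun S => P ⊆ S),
        hat (assoc C0 9 7) (yS S) = ((M C0 S : ℤ) : ℚ) := by
      intro S hS
      simp only [four, Finset.mem_filter, Finset.mem_powersetCard] at hS
      exact hatM C0 h S hS.1.2
    rw [Finset.sum_congr rfl hM] at ht
    rw [← ht, proj_face C0 h, hP]
    field_simp
    try ring
  exact_mod_cast hq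

include h in
lemma Wint (i : Fin 12) :
    ∑ S ∈ four.filter (fun S => i ∈ S), (M C0 S) ^ 2 = 21 := by
  have hAi : Ai i = AU {i} := by
    ext y
    simp [Ai, AU]
  have hW := W_eq_21 C0 h i
  rw [hAi] at hW
  have ht := transfer C0 h (fun q => q ^ 2) (by norm_num) {i}
  rw [ht] at hW
  have hM : ∀ S ∈ four.filter (fun S => ({i} : Finset (Fin 12)) ⊆ S),
      (hat (assoc C0 9 7) (yS S)) ^ 2 = (((M C0 S) ^ 2 : ℤ) : ℚ) := by
    intro S hS
    simp only [four, Finset.mem_filter, Finset.mem_powersetCard] at hS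
    rw [hatM C0 h S hS.1.2]
    push_cast
    ring
  rw [Finset.sum_congr rfl hM] at hW
  have hfilt : four.filter (fun S => ({i} : Finset (Fin 12)) ⊆ S)
      = four.filter (fun S => i ∈ S) := by
    apply Finset.filter_congr
    intro S _
    simp [Finset.singleton_subset_iff]
  rw [hfilt] at hW
  exact_mod_cast hW

end Part


def threes : Finset (Finset (Fin 12)) := Finset.powersetCard 3 Finset.univ
section Endgame
variable (M : Finset (Fin 12) → ℤ)

def w (T : Finset (Fin 12)) : ℤ := ∑ S ∈ four.filter (fun S => T ⊆ S), (M S) ^ 2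

lemma sq_mod_two (m : ℤ) : m ^ 2 % 2 = m % 2 := by
  have h2 : (m ^ 2 - m) % 2 = 0 := by
    have hfac : m ^ 2 - m = m * (m - 1) := by ring
    rw [hfac]
    rcases Int.even_or_odd m with he | ho
    · exact Int.even_iff.mp (he.mul_right _)
    · have : Even (m - 1) := by
        rcases ho with ⟨k, hk⟩
        exact ⟨k, by omega⟩
      exact Int.even_iff.mp (this.mul_left _)
  omega

lemma parity_sq_sum (s : Finset (Finset (Fin 12))) :
    (∑ S ∈ s, (M S) ^ 2) % 2 = (∑ S ∈ s, M S) % 2 := by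
  rw [Finset.sum_int_mod s 2 (fun S => M S ^ 2), Finset.sum_int_mod s 2 M]
  congr 1
  exact Finset.sum_congr rfl (fun S _ => sq_mod_two (M S))

lemma w_nonneg (T : Finset (Fin 12)) : 0 ≤ w M T :=
  Finset.sum_nonneg (fun S _ => sq_nonneg _)

variable (hodd3 : ∀ T : Finset (Fin 12), T.card = 3 →
    Odd (∑ S ∈ four.filter (fun S => T ⊆ S), M S))

include hodd3 in
lemma w_odd (T : Finset (Fin 12)) (hT : T.card = 3) : Odd (w M T) := by
  have h1 := Int.odd_iff.mp (hodd3 T hT)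
  have h2 := parity_sq_sum M (four.filter (fun S => T ⊆ S))
  rw [Int.odd_iff]
  unfold w
  omega

include hodd3 in
lemma w_pos (T : Finset (Fin 12)) (hT : T.card = 3) : 1 ≤ w M T := by
  have := w_odd M hodd3 T hT
  have := w_nonneg M T
  rcases ‹Odd (w M T)› with ⟨k, hk⟩
  omega

/-- generic double-count swap -/
lemma swap_sum (𝒯 : Finset (Finset (Fin 12))) :
    ∑ T ∈ 𝒯, w M T
      = ∑ S ∈ four, ((𝒯.filter (fun T => T ⊆ S)).card : ℤ) * (M S) ^ 2 := by
  unfold w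
  have step : ∀ T ∈ 𝒯, ∑ S ∈ four.filter (fun S => T ⊆ S), (M S) ^ 2
      = ∑ S ∈ four, if T ⊆ S then (M S) ^ 2 else 0 := by
    intro T _
    rw [Finset.sum_filter]
  rw [Finset.sum_congr rfl step, Finset.sum_comm]
  apply Finset.sum_congr rfl
  intro S _
  rw [Finset.sum_ite, Finset.sum_const_zero, add_zero, Finset.sum_const]
  rw [nsmul_eq_mul]

lemma count_in_S (i : Fin 12) (S : Finset (Fin 12)) (hS : S ∈ four) :
    ((threes.filter (fun T => i ∈ T)).filter (fun T => T ⊆ S)).card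
      = if i ∈ S then 3 else 0 := by
  simp only [four, Finset.mem_powersetCard] at hS
  by_cases hi : i ∈ S
  · rw [if_pos hi]
    have : (threes.filter (fun T => i ∈ T)).filter (fun T => T ⊆ S)
        = threes.filter (fun T => ({i} : Finset (Fin 12)) ⊆ T ∧ T ⊆ S) := by
      rw [Finset.filter_filter]
      apply Finset.filter_congr
      intro T _
      simp [Finset.singleton_subset_iff, and_comm]
    rw [this]
    unfold threes
    rw [card_sandwich {i} S 3 (Finset.singleton_subset_iff.mpr hi) (by simp)]
    rw [Finset.card_singleton, hS.2]
    decide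
  · rw [if_neg hi]
    rw [Finset.card_eq_zero, Finset.filter_filter]
    apply Finset.filter_false_of_mem
    intro T _
    rintro ⟨hiT, hTS⟩
    exact hi (hTS hiT)

variable (hW : ∀ i : Fin 12, ∑ S ∈ four.filter (fun S => i ∈ S), (M S) ^ 2 = 21)

include hW in
lemma sum_w_coord (i : Fin 12) :
    ∑ T ∈ threes.filter (fun T => i ∈ T), w M T = 63 := by
  rw [swap_sum]
  have : ∀ S ∈ four, (((threes.filter (fun T => i ∈ T)).filter
        (fun T => T ⊆ S)).card : ℤ) * (M S) ^ 2
      = if i ∈ S then 3 * (M S) ^ 2 else 0 := by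
    intro S hS
    rw [count_in_S i S hS]
    by_cases hi : i ∈ S <;> simp [hi]
  rw [Finset.sum_congr rfl this, ← Finset.sum_filter, ← Finset.mul_sum, hW i]
  norm_num

lemma card_threes_coord (i : Fin 12) :
    (threes.filter (fun T => i ∈ T)).card = 55 := by
  have : threes.filter (fun T => i ∈ T)
      = threes.filter (fun T => ({i} : Finset (Fin 12)) ⊆ T ∧ T ⊆ Finset.univ) := by
    apply Finset.filter_congr
    intro T _
    simp [Finset.singleton_subset_iff]
  rw [this]
  unfold threes
  rw [card_sandwich {i} Finset.univ 3 (Finset.subset_univ _) (by simp)]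
  simp
  decide

include hodd3 hW in
lemma slack_coord (i : Fin 12) :
    ∑ T ∈ threes.filter (fun T => i ∈ T), (w M T - 1) = 8 := by
  rw [Finset.sum_sub_distrib, sum_w_coord M hW i, Finset.sum_const, card_threes_coord]
  norm_num

include hodd3 hW in
lemma M_sq_le_one (S : Finset (Fin 12)) (hS : S ∈ four) : (M S) ^ 2 ≤ 1 := by
  by_contra hbig
  push_neg at hbig
  have hS' := hS
  simp only [four, Finset.mem_powersetCard] at hS'
  have hM4 : 4 ≤ (M S) ^ 2 := by
    rcases le_or_gt (M S) (-2) with hm | hm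
    · nlinarith
    · rcases le_or_gt 2 (M S) with hm2 | hm2
      · nlinarith
      · interval_cases (M S) <;> omega
  -- pick i ∈ S
  have hne : S.Nonempty := by
    rw [← Finset.card_pos, hS'.2]
    norm_num
  obtain ⟨i, hi⟩ := hne
  -- the three triples i ∈ T ⊆ S have w ≥ 5
  set TT := (threes.filter (fun T => i ∈ T)).filter (fun T => T ⊆ S) with hTT
  have hTTcard : TT.card = 3 := by
    rw [hTT, count_in_S i S hS, if_pos hi]
  have hwTT : ∀ T ∈ TT, 5 ≤ w M T := by
    intro T hT
    simp only [hTT, Finset.mem_filter, threes, Finset.mem_powersetCard] at hT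
    obtain ⟨⟨⟨_, hT3⟩, _⟩, hTS⟩ := hT
    have hw4 : 4 ≤ w M T := by
      have hterm : (M S) ^ 2 ≤ w M T := by
        apply Finset.single_le_sum (f := fun S' => (M S') ^ 2)
          (fun S' _ => sq_nonneg _)
        simp only [Finset.mem_filter]
        exact ⟨hS, hTS⟩
      omega
    have hodd := w_odd M hodd3 T hT3
    rcases hodd with ⟨k, hk⟩
    omega
  have hsub : TT ⊆ threes.filter (fun T => i ∈ T) := Finset.filter_subset _ _
  have hbound : (12 : ℤ) ≤ ∑ T ∈ TT, (w M T - 1) := by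
    calc (12 : ℤ) = ∑ _T ∈ TT, 4 := by rw [Finset.sum_const, hTTcard]; norm_num
    _ ≤ ∑ T ∈ TT, (w M T - 1) := by
        apply Finset.sum_le_sum
        intro T hT
        have := hwTT T hT
        omega
  have hmono : ∑ T ∈ TT, (w M T - 1) ≤ ∑ T ∈ threes.filter (fun T => i ∈ T), (w M T - 1) := by
    apply Finset.sum_le_sum_of_subset_of_nonneg hsub
    intro T hT _
    simp only [Finset.mem_filter, threes, Finset.mem_powersetCard] at hT
    have := w_pos M hodd3 T hT.1.2
    omega
  rw [slack_coord M hodd3 hW i] at hmono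
  omega

lemma count_in_S_pair (P : Finset (Fin 12)) (hP : P.card = 2)
    (S : Finset (Fin 12)) (hS : S ∈ four) :
    ((threes.filter (fun T => P ⊆ T)).filter (fun T => T ⊆ S)).card
      = if P ⊆ S then 2 else 0 := by
  simp only [four, Finset.mem_powersetCard] at hS
  by_cases hPS : P ⊆ S
  · rw [if_pos hPS]
    have heq : (threes.filter (fun T => P ⊆ T)).filter (fun T => T ⊆ S)
        = threes.filter (fun T => P ⊆ T ∧ T ⊆ S) := by
      rw [Finset.filter_filter]
    rw [heq]
    unfold threes
    rw [card_sandwich P S 3 hPS (by omega)]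
    rw [hS.2, hP]
    decide
  · rw [if_neg hPS]
    rw [Finset.card_eq_zero, Finset.filter_filter]
    apply Finset.filter_false_of_mem
    intro T _
    rintro ⟨hPT, hTS⟩
    exact hPS (hPT.trans hTS)

lemma sum_w_pair (P : Finset (Fin 12)) (hP : P.card = 2) :
    ∑ T ∈ threes.filter (fun T => P ⊆ T), w M T
      = 2 * ∑ S ∈ four.filter (fun S => P ⊆ S), (M S) ^ 2 := by
  rw [swap_sum]
  have step : ∀ S ∈ four, (((threes.filter (fun T => P ⊆ T)).filter
        (fun T => T ⊆ S)).card : ℤ) * (M S) ^ 2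
      = if P ⊆ S then 2 * (M S) ^ 2 else 0 := by
    intro S hS
    rw [count_in_S_pair P hP S hS]
    by_cases hPS : P ⊆ S <;> simp [hPS]
  rw [Finset.sum_congr rfl step, ← Finset.sum_filter, ← Finset.mul_sum]

lemma card_threes_pair (P : Finset (Fin 12)) (hP : P.card = 2) :
    (threes.filter (fun T => P ⊆ T)).card = 10 := by
  have heq : threes.filter (fun T => P ⊆ T)
      = threes.filter (fun T => P ⊆ T ∧ T ⊆ Finset.univ) := by
    apply Finset.filter_congr
    intro T _
    simp
  rw [heq]
  unfold threes
  rw [card_sandwich P Finset.univ 3 (Finset.subset_univ _) (by omega)]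
  rw [hP]
  simp

variable (hodd2 : ∀ P : Finset (Fin 12), P.card = 2 →
    Odd (∑ S ∈ four.filter (fun S => P ⊆ S), M S))

include hodd2 in
lemma WP_odd (P : Finset (Fin 12)) (hP : P.card = 2) :
    Odd (∑ S ∈ four.filter (fun S => P ⊆ S), (M S) ^ 2) := by
  have h1 := Int.odd_iff.mp (hodd2 P hP)
  have h2 := parity_sq_sum M (four.filter (fun S => P ⊆ S))
  rw [Int.odd_iff]
  omega

include hodd3 hodd2 hW in
lemma WP_range (P : Finset (Fin 12)) (hP : P.card = 2) (i : Fin 12) (hiP : i ∈ P) :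
    (∑ S ∈ four.filter (fun S => P ⊆ S), (M S) ^ 2) = 5
    ∨ (∑ S ∈ four.filter (fun S => P ⊆ S), (M S) ^ 2) = 7
    ∨ (∑ S ∈ four.filter (fun S => P ⊆ S), (M S) ^ 2) = 9 := by
  set WP := ∑ S ∈ four.filter (fun S => P ⊆ S), (M S) ^ 2 with hWP
  have he : ∑ T ∈ threes.filter (fun T => P ⊆ T), w M T = 2 * WP := sum_w_pair M P hP
  have hlow : (10 : ℤ) ≤ ∑ T ∈ threes.filter (fun T => P ⊆ T), w M T := by
    calc (10 : ℤ) = ∑ _T ∈ threes.filter (fun T => P ⊆ T), 1 := by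
          rw [Finset.sum_const, card_threes_pair P hP]; norm_num
    _ ≤ _ := by
        apply Finset.sum_le_sum
        intro T hT
        simp only [Finset.mem_filter, threes, Finset.mem_powersetCard] at hT
        exact w_pos M hodd3 T hT.1.2
  have hsub : threes.filter (fun T => P ⊆ T) ⊆ threes.filter (fun T => i ∈ T) := by
    intro T hT
    simp only [Finset.mem_filter] at hT ⊢
    exact ⟨hT.1, hT.2 hiP⟩
  have hupper : ∑ T ∈ threes.filter (fun T => P ⊆ T), (w M T - 1) ≤ 8 := by
    rw [← slack_coord M hodd3 hW i]
    apply Finset.sum_le_sum_of_subset_of_nonneg hsub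
    intro T hT _
    simp only [Finset.mem_filter, threes, Finset.mem_powersetCard] at hT
    have := w_pos M hodd3 T hT.1.2
    omega
  rw [Finset.sum_sub_distrib, Finset.sum_const, card_threes_pair P hP, he] at hupper
  have hodd := WP_odd M hodd2 P hP
  rcases hodd with ⟨k, hk⟩
  simp only [nsmul_eq_mul] at hupper
  omega

include hodd3 hW in
lemma M_nonzero_sq (S : Finset (Fin 12)) (hS : S ∈ four) (hne : M S ≠ 0) :
    (M S) ^ 2 = 1 := by
  have hle := M_sq_le_one M hodd3 hW S hS
  have hge : 1 ≤ (M S) ^ 2 := by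
    rcases lt_or_gt_of_ne hne with hm | hm <;> nlinarith
  omega

end Endgame


-- endgame axioms
section Final
variable (C0 : Finset (Vtx 12)) (h : IsEqPartition C0 3 9 7 5)

include h in
lemma hodd3' : ∀ T : Finset (Fin 12), T.card = 3 →
    Odd (∑ S ∈ four.filter (fun S => T ⊆ S), M C0 S) := by
  intro T hT
  rw [triple_sum C0 h T hT]
  exact ⟨(aU C0 T : ℤ) - 4, by ring⟩

include h in
lemma hodd2' : ∀ P : Finset (Fin 12), P.card = 2 →
    Odd (∑ S ∈ four.filter (fun S => P ⊆ S), M C0 S) := by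
  intro P hP
  rw [pair_sum C0 h P hP]
  exact ⟨2 * (aU C0 P : ℤ) - 4, by ring⟩

include h in
lemma cnt_eq (T : Finset (Fin 12)) :
    cnt C0 T = (four.filter (fun S => T ⊆ S ∧ M C0 S ≠ 0)).card := by
  unfold cnt nonzeros
  rw [Finset.filter_filter]
  apply Finset.card_nbij' Zset yS
  · intro y hy
    simp only [Finset.mem_coe, Finset.mem_filter, Finset.mem_univ, true_and] at hy ⊢
    obtain ⟨hne, hvan⟩ := hy
    have h8 := support_wt8 _ (eigen C0 h) y hne
    have hZ4 := Zset_card_of_wt8 y h8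
    refine ⟨?_, ?_, ?_⟩
    · simp only [four, Finset.mem_powersetCard]
      exact ⟨Finset.subset_univ _, hZ4⟩
    · intro i hi
      simp only [Zset, Finset.mem_filter, Finset.mem_univ, true_and]
      exact hvan i hi
    · intro hM0
      apply hne
      have := hatM C0 h (Zset y) hZ4
      rw [yS_Zset] at this
      rw [this, hM0]
      norm_num
  · intro S hS
    simp only [Finset.mem_coe, Finset.mem_filter, Finset.mem_univ, true_and] at hS ⊢
    obtain ⟨hSf, hTS, hMne⟩ := hS
    simp only [four, Finset.mem_powersetCard] at hSf
    constructor
    · rw [hatM C0 h S hSf.2]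
      exact_mod_cast hMne
    · intro i hi
      simp only [yS, if_pos (hTS hi)]
  · intro y _
    exact yS_Zset y
  · intro S _
    exact Zset_yS S

include h in
lemma cnt_w (T : Finset (Fin 12)) (hT : T ∈ threes) :
    (cnt C0 T : ℤ) = w (M C0) T := by
  rw [cnt_eq C0 h T]
  have hsplit : four.filter (fun S => T ⊆ S ∧ M C0 S ≠ 0)
      = (four.filter (fun S => T ⊆ S)).filter (fun S => M C0 S ≠ 0) := by
    rw [Finset.filter_filter]
  rw [hsplit]
  unfold w
  rw [Finset.card_filter]
  push_cast
  apply Finset.sum_congr rfl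
  intro S hS
  simp only [Finset.mem_filter] at hS
  by_cases hM0 : M C0 S = 0
  · rw [if_neg (by simpa using hM0), hM0]
    norm_num
  · rw [if_pos hM0, M_nonzero_sq (M C0) (hodd3' C0 h) (Wint C0 h) S hS.1 hM0]

include h in
theorem final (i j : Fin 12) (hij : i ≠ j) :
    ∃ m : ℕ, (m = 0 ∨ m = 2 ∨ m = 4) ∧
      ∑ T ∈ (Finset.powersetCard 3 (Finset.univ : Finset (Fin 12))).filter
          (fun T => i ∈ T ∧ j ∈ T), (cnt C0 T - 1) = 2 * m := by
  set P : Finset (Fin 12) := {i, j} with hPdef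
  have hP2 : P.card = 2 := by
    rw [hPdef, Finset.card_insert_of_notMem (by simpa using hij), Finset.card_singleton]
  have hiP : i ∈ P := by simp [hPdef]
  have hfilt : (Finset.powersetCard 3 (Finset.univ : Finset (Fin 12))).filter
      (fun T => i ∈ T ∧ j ∈ T) = threes.filter (fun T => P ⊆ T) := by
    apply Finset.filter_congr
    intro T _
    rw [hPdef]
    simp [Finset.insert_subset_iff, Finset.singleton_subset_iff]
  have hcnt1 : ∀ T ∈ threes.filter (fun T => P ⊆ T), 1 ≤ cnt C0 T := by
    intro T hT
    simp only [Finset.mem_filter, threes, Finset.mem_powersetCard] at hT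
    have hwp := w_pos (M C0) (hodd3' C0 h) T hT.1.2
    have := cnt_w C0 h T (by simp only [threes, Finset.mem_powersetCard]; exact hT.1)
    omega
  have hcast : ((∑ T ∈ threes.filter (fun T => P ⊆ T), (cnt C0 T - 1) : ℕ) : ℤ)
      = ∑ T ∈ threes.filter (fun T => P ⊆ T), ((cnt C0 T : ℤ) - 1) := by
    push_cast
    apply Finset.sum_congr rfl
    intro T hT
    have := hcnt1 T hT
    push_cast [Nat.cast_sub this]
    ring
  have hsum : ∑ T ∈ threes.filter (fun T => P ⊆ T), ((cnt C0 T : ℤ) - 1)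
      = 2 * (∑ S ∈ four.filter (fun S => P ⊆ S), (M C0 S) ^ 2) - 10 := by
    rw [Finset.sum_sub_distrib, Finset.sum_const, card_threes_pair P hP2]
    have : ∑ T ∈ threes.filter (fun T => P ⊆ T), (cnt C0 T : ℤ)
        = ∑ T ∈ threes.filter (fun T => P ⊆ T), w (M C0) T := by
      apply Finset.sum_congr rfl
      intro T hT
      simp only [Finset.mem_filter] at hT
      exact cnt_w C0 h T hT.1
    rw [this, sum_w_pair (M C0) P hP2]
    simp [nsmul_eq_mul]
  rcases WP_range (M C0) (hodd3' C0 h) (Wint C0 h) (hodd2' C0 h) P hP2 i hiP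
    with hW5 | hW7 | hW9
  · refine ⟨0, Or.inl rfl, ?_⟩
    rw [hfilt]
    have : ((∑ T ∈ threes.filter (fun T => P ⊆ T), (cnt C0 T - 1) : ℕ) : ℤ) = 0 := by
      rw [hcast, hsum, hW5]; ring
    exact_mod_cast this
  · refine ⟨2, Or.inr (Or.inl rfl), ?_⟩
    rw [hfilt]
    have : ((∑ T ∈ threes.filter (fun T => P ⊆ T), (cnt C0 T - 1) : ℕ) : ℤ) = 4 := by
      rw [hcast, hsum, hW7]; ring
    exact_mod_cast this
  · refine ⟨4, Or.inr (Or.inr rfl), ?_⟩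
    rw [hfilt]
    have : ((∑ T ∈ threes.filter (fun T => P ⊆ T), (cnt C0 T - 1) : ℕ) : ℤ) = 8 := by
      rw [hcast, hsum, hW9]; ring
    exact_mod_cast this

end Final

end FDF

theorem stmt17 (C0 : Finset (Vtx 12)) (h : IsEqPartition C0 3 9 7 5) :
    ∀ i j : Fin 12, i ≠ j →
      ∃ m : ℕ, (m = 0 ∨ m = 2 ∨ m = 4) ∧
        ∑ T ∈ (Finset.powersetCard 3 (Finset.univ : Finset (Fin 12))).filter
            (fun T => i ∈ T ∧ j ∈ T), (cnt C0 T - 1) = 2 * m := by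
  intro i j hij
  exact FDF.final C0 h i j hij
end
end
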